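/- arXiv:2110.13574 — 3 statements merged into one kernel-verified Lean document; each statement's English description precedes it below -/
import Mathlib

section
/- Let P be a graded poset and G a copresheaf of abelian groups on P. If Λ and Λ' are both cellular forms of (P,G), then Λ and Λ' are isomorphic as P-graded differential ℤ-modules: there is a family of group isomorphisms Λ_x ≅ Λ'_x (x ∈ P) commuting with the differentials. -/
open CategoryTheory Classical

/-- A rank function making `P` a graded poset: minimal elements have rank `0`, the rank
increases by `1` along covering relations, and is strictly monotone. -/
def IsGrading (P : Type) [PartialOrder P] (r : P → ℕ) : Prop :=
  (∀ x : P, IsMin x → r x = 0) ∧ (∀ x y : P, x ⋖ y → r y = r x + 1) ∧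
    ∀ x y : P, x < y → r x < r y

/-- A cellular form of a pair `(P, G)` where `P` is a poset graded by `r` and `G` is a
copresheaf of abelian groups on `P` (a functor `P ⥤ AddCommGrp`).

It consists of a `P`-graded differential `ℤ`-module `Λ = ⊕_{x∈P} Λ_x`, the differential
being recorded by its components `δ x y : Λ_x →+ Λ_y`, together with the maps
`e x y : Λ_y →+ G(x)` (for `y ≤ x` of rank `0`) realising the isomorphism of copresheaves
`(x ↦ H₀(Λ_{≤x})) ≅ G`, such that:

* `∂` maps `Λ_x` into `⊕_{y⋖x} Λ_y` (fields `delta_support`, `delta_fin`) and `∂∂ = 0`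
  (field `delta_delta`); hence each `Λ_{≤x} = ⊕_{y≤x} Λ_y` is a chain complex graded by
  rank;
* `Λ_{≤x}` has trivial homology in all positive degrees (field `exact_pos`: every cycle
  of positive degree supported below `x` is a boundary of a chain supported below `x`);
* the copresheaf `x ↦ H₀(Λ_{≤x})` (whose extension maps are induced by the inclusions
  `Λ_{≤x} ↪ Λ_{≤x'}`) is isomorphic to `G` via the maps induced by `e` (fields
  `e_natural`, `e_surj`, `e_ker`: `e` is compatible with the extension maps of `G`, and
  the induced map `H₀(Λ_{≤x}) → G(x)` is surjective and injective — an element of degree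
  `0` maps to `0` iff it is a boundary). -/
structure CellularForm (P : Type) [PartialOrder P] (r : P → ℕ)
    (G : P ⥤ AddCommGrpCat.{0}) where
  Λ : P → Type
  [grp : ∀ x, AddCommGroup (Λ x)]
  δ : ∀ x y : P, Λ x →+ Λ y
  e : ∀ x y : P, y ≤ x → r y = 0 → (Λ y →+ G.obj x)
  delta_support : ∀ x y : P, ¬(y ⋖ x) → δ x y = 0
  delta_fin : ∀ (x : P) (a : Λ x), {y : P | δ x y a ≠ 0}.Finite
  delta_delta : ∀ (x z : P) (a : Λ x), (∑ᶠ y : P, δ y z (δ x y a)) = 0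
  exact_pos : ∀ (x : P) (q : ℕ) (a : ∀ y : P, Λ y),
    {y : P | a y ≠ 0}.Finite →
    (∀ y, a y ≠ 0 → y ≤ x ∧ r y = q + 1) →
    (∀ z, (∑ᶠ y : P, δ y z (a y)) = 0) →
    ∃ b : ∀ y : P, Λ y, {y : P | b y ≠ 0}.Finite ∧
      (∀ y, b y ≠ 0 → y ≤ x ∧ r y = q + 2) ∧ ∀ y, a y = ∑ᶠ w : P, δ w y (b w)
  e_natural : ∀ (x x' y : P) (h : y ≤ x) (h' : x ≤ x') (h0 : r y = 0) (a : Λ y),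
    G.map (homOfLE h') (e x y h h0 a) = e x' y (h.trans h') h0 a
  e_surj : ∀ (x : P) (g : G.obj x), ∃ a : ∀ y : P, Λ y,
    {y : P | a y ≠ 0}.Finite ∧ (∀ y, a y ≠ 0 → y ≤ x ∧ r y = 0) ∧
    (∑ᶠ y : P, if h : y ≤ x ∧ r y = 0 then e x y h.1 h.2 (a y) else 0) = g
  e_ker : ∀ (x : P) (a : ∀ y : P, Λ y), {y : P | a y ≠ 0}.Finite →
    (∀ y, a y ≠ 0 → y ≤ x ∧ r y = 0) →
    ((∑ᶠ y : P, if h : y ≤ x ∧ r y = 0 then e x y h.1 h.2 (a y) else 0) = 0 ↔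
      ∃ b : ∀ y : P, Λ y, {y : P | b y ≠ 0}.Finite ∧
        (∀ y, b y ≠ 0 → y ≤ x ∧ r y = 1) ∧ ∀ y, a y = ∑ᶠ w : P, δ w y (b w))

attribute [instance] CellularForm.grp

/-- The property, for a given `P`-graded differential `ℤ`-module `(Λ, δ)`, of being a
cellular form of `(P, G)`; see `CellularForm` for a description of the fields, the only
difference being that here the realising maps `e` are merely required to exist. -/
structure IsCellularForm (P : Type) [PartialOrder P] (r : P → ℕ)
    (G : P ⥤ AddCommGrpCat.{0}) (Λ : P → Type) [inst : ∀ x, AddCommGroup (Λ x)]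
    (δ : ∀ x y : P, Λ x →+ Λ y) : Prop where
  delta_support : ∀ x y : P, ¬(y ⋖ x) → δ x y = 0
  delta_fin : ∀ (x : P) (a : Λ x), {y : P | δ x y a ≠ 0}.Finite
  delta_delta : ∀ (x z : P) (a : Λ x), (∑ᶠ y : P, δ y z (δ x y a)) = 0
  exact_pos : ∀ (x : P) (q : ℕ) (a : ∀ y : P, Λ y),
    {y : P | a y ≠ 0}.Finite →
    (∀ y, a y ≠ 0 → y ≤ x ∧ r y = q + 1) →
    (∀ z, (∑ᶠ y : P, δ y z (a y)) = 0) →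
    ∃ b : ∀ y : P, Λ y, {y : P | b y ≠ 0}.Finite ∧
      (∀ y, b y ≠ 0 → y ≤ x ∧ r y = q + 2) ∧ ∀ y, a y = ∑ᶠ w : P, δ w y (b w)
  hom_zero : ∃ e : ∀ x y : P, y ≤ x → r y = 0 → (Λ y →+ G.obj x),
    (∀ (x x' y : P) (h : y ≤ x) (h' : x ≤ x') (h0 : r y = 0) (a : Λ y),
      G.map (homOfLE h') (e x y h h0 a) = e x' y (h.trans h') h0 a) ∧
    (∀ (x : P) (g : G.obj x), ∃ a : ∀ y : P, Λ y,
      {y : P | a y ≠ 0}.Finite ∧ (∀ y, a y ≠ 0 → y ≤ x ∧ r y = 0) ∧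
      (∑ᶠ y : P, if h : y ≤ x ∧ r y = 0 then e x y h.1 h.2 (a y) else 0) = g) ∧
    (∀ (x : P) (a : ∀ y : P, Λ y), {y : P | a y ≠ 0}.Finite →
      (∀ y, a y ≠ 0 → y ≤ x ∧ r y = 0) →
      ((∑ᶠ y : P, if h : y ≤ x ∧ r y = 0 then e x y h.1 h.2 (a y) else 0) = 0 ↔
        ∃ b : ∀ y : P, Λ y, {y : P | b y ≠ 0}.Finite ∧
          (∀ y, b y ≠ 0 → y ≤ x ∧ r y = 1) ∧ ∀ y, a y = ∑ᶠ w : P, δ w y (b w)))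
section Aux

variable {P : Type} [PartialOrder P] {r : P → ℕ} {G : P ⥤ AddCommGrpCat.{0}}

lemma IsGrading.mono (hr : IsGrading P r) {x y : P} (h : y ≤ x) : r y ≤ r x := by
  rcases h.lt_or_eq with h' | h'
  · exact (hr.2.2 _ _ h').le
  · rw [h']

lemma IsGrading.eq_of_le (hr : IsGrading P r) {x y : P} (h : y ≤ x) (hE : r y = r x) : y = x := by
  rcases h.lt_or_eq with h' | h'
  · exact absurd hE (hr.2.2 _ _ h').ne
  · exact h'

lemma IsGrading.cov (hr : IsGrading P r) {x y : P} (h : y ⋖ x) : r x = r y + 1 :=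
  hr.2.1 y x h

lemma delta_inj (hr : IsGrading P r) (C : CellularForm P r G) {x : P} {q : ℕ}
    (hx : r x = q + 1) {a : C.Λ x} (h : ∀ y, C.δ x y a = 0) : a = 0 := by
  classical
  obtain ⟨b, hbfin, hbsupp, hbeq⟩ := C.exact_pos x q (Pi.single x a)
    ((Set.finite_singleton x).subset (by
      intro y hy
      by_contra hyx
      exact hy (Pi.single_eq_of_ne hyx a)))
    (by
      intro y hy
      rcases eq_or_ne y x with rfl | hyx
      · exact ⟨le_rfl, hx⟩
      · exact absurd (Pi.single_eq_of_ne hyx a) hy)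
    (by
      intro z
      rw [finsum_eq_single _ x fun y hy => by rw [Pi.single_eq_of_ne hy, map_zero],
        Pi.single_eq_same]
      exact h z)
  have hb : ∀ w, b w = 0 := by
    intro w
    by_contra hw
    obtain ⟨hle, hrw⟩ := hbsupp w hw
    have := hr.mono hle
    omega
  have h2 := hbeq x
  rw [Pi.single_eq_same] at h2
  rw [h2, finsum_congr (fun w => by rw [hb w, map_zero] :
    ∀ w : P, C.δ w x (b w) = 0), finsum_zero]

lemma delta_ext (hr : IsGrading P r) (C : CellularForm P r G) {x : P} {q : ℕ}
    (hx : r x = q + 1) {a b : C.Λ x} (h : ∀ y, C.δ x y a = C.δ x y b) : a = b := by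
  have h2 := delta_inj hr C hx (a := a - b) fun y => by rw [map_sub, h, sub_self]
  exact sub_eq_zero.mp h2

lemma e_self_bijective (hr : IsGrading P r) (C : CellularForm P r G) (x : P) (hx : r x = 0) :
    Function.Bijective (C.e x x le_rfl hx) := by
  classical
  constructor
  · rw [injective_iff_map_eq_zero]
    intro a ha
    have hfin : {y : P | Pi.single x a y ≠ 0}.Finite :=
      (Set.finite_singleton x).subset (by
        intro y hy
        by_contra hyx
        exact hy (Pi.single_eq_of_ne hyx a))
    have hsupp : ∀ y, Pi.single x a y ≠ 0 → y ≤ x ∧ r y = 0 := by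
      intro y hy
      rcases eq_or_ne y x with rfl | hyx
      · exact ⟨le_rfl, hx⟩
      · exact absurd (Pi.single_eq_of_ne hyx a) hy
    have hsum : (∑ᶠ y : P, if h : y ≤ x ∧ r y = 0 then
        C.e x y h.1 h.2 (Pi.single x a y) else 0) = 0 := by
      rw [finsum_eq_single _ x fun y hy => ?_]
      · rw [dif_pos ⟨le_rfl, hx⟩, Pi.single_eq_same]
        exact ha
      · by_cases h : y ≤ x ∧ r y = 0
        · rw [dif_pos h, Pi.single_eq_of_ne hy, map_zero]
        · rw [dif_neg h]
    obtain ⟨b, hbfin, hbsupp, hbeq⟩ := (C.e_ker x _ hfin hsupp).mp hsum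
    have hb : ∀ w, b w = 0 := by
      intro w
      by_contra hw
      obtain ⟨hle, hrw⟩ := hbsupp w hw
      have := hr.mono hle
      omega
    have h2 := hbeq x
    rw [Pi.single_eq_same] at h2
    rw [h2, finsum_congr (fun w => by rw [hb w, map_zero] :
      ∀ w : P, C.δ w x (b w) = 0), finsum_zero]
  · intro g
    obtain ⟨a, hfin, hsupp, hsum⟩ := C.e_surj x g
    have ha : ∀ y, y ≠ x → a y = 0 := by
      intro y hy
      by_contra h
      obtain ⟨hle, h0⟩ := hsupp y h
      exact hy (hr.eq_of_le hle (by omega))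
    refine ⟨a x, ?_⟩
    rw [← hsum, finsum_eq_single _ x fun y hy => ?_]
    · rw [dif_pos ⟨le_rfl, hx⟩]
    · by_cases h : y ≤ x ∧ r y = 0
      · rw [dif_pos h, ha y hy, map_zero]
      · rw [dif_neg h]

noncomputable def equivE (hr : IsGrading P r) (C : CellularForm P r G) (x : P) (hx : r x = 0) :
    C.Λ x ≃+ G.obj x :=
  AddEquiv.ofBijective (C.e x x le_rfl hx) (e_self_bijective hr C x hx)

end Aux
section CompatSec

variable {P : Type} [PartialOrder P] {r : P → ℕ} {G : P ⥤ AddCommGrpCat.{0}}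

def Compat (C C' : CellularForm P r G) (n : ℕ)
    (φ : ∀ x : P, r x < n → (C.Λ x ≃+ C'.Λ x)) : Prop :=
  (∀ (x y : P) (hx : r x < n) (hy : r y < n) (a : C.Λ x),
      φ y hy (C.δ x y a) = C'.δ x y (φ x hx a)) ∧
  (∀ (x y : P) (h : y ≤ x) (h0 : r y = 0) (hy : r y < n) (a : C.Λ y),
      C'.e x y h h0 (φ y hy a) = C.e x y h h0 a)

lemma Compat.symm {C C' : CellularForm P r G} {n : ℕ}
    {φ : ∀ x : P, r x < n → (C.Λ x ≃+ C'.Λ x)} (hφ : Compat C C' n φ) :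
    Compat C' C n (fun x hx => (φ x hx).symm) := by
  constructor
  · intro x y hx hy a
    have h1 := hφ.1 x y hx hy ((φ x hx).symm a)
    rw [AddEquiv.apply_symm_apply] at h1
    simp only
    rw [← h1, AddEquiv.symm_apply_apply]
  · intro x y h h0 hy a
    have h1 := hφ.2 x y h h0 hy ((φ y hy).symm a)
    rw [AddEquiv.apply_symm_apply] at h1
    simp only
    exact h1.symm

lemma exists_preimage (hr : IsGrading P r) (C' : CellularForm P r G) (x : P) (q : ℕ)
    (hx : r x = q + 1) (c : ∀ y : P, C'.Λ y) (hfin : {y : P | c y ≠ 0}.Finite)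
    (hsupp : ∀ y, c y ≠ 0 → y ≤ x ∧ r y = q)
    (hcyc : ∀ z, (∑ᶠ y : P, C'.δ y z (c y)) = 0)
    (hq0 : q = 0 → (∑ᶠ y : P, if h : y ≤ x ∧ r y = 0 then C'.e x y h.1 h.2 (c y) else 0) = 0) :
    ∃ b : C'.Λ x, ∀ y, C'.δ x y b = c y := by
  have key : ∃ b : ∀ y : P, C'.Λ y, {y : P | b y ≠ 0}.Finite ∧
      (∀ y, b y ≠ 0 → y ≤ x ∧ r y = q + 1) ∧ ∀ y, c y = ∑ᶠ w : P, C'.δ w y (b w) := by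
    cases q with
    | zero => exact (C'.e_ker x c hfin hsupp).mp (hq0 rfl)
    | succ p => exact C'.exact_pos x p c hfin hsupp hcyc
  obtain ⟨b, hbfin, hbsupp, hbeq⟩ := key
  have hb0 : ∀ w, w ≠ x → b w = 0 := by
    intro w hw
    by_contra h
    obtain ⟨hle, hrw⟩ := hbsupp w h
    exact hw (hr.eq_of_le hle (by omega))
  refine ⟨b x, fun y => ?_⟩
  rw [hbeq y, finsum_eq_single _ x fun w hw => by rw [hb0 w hw, map_zero]]

end CompatSec
section LiftSec

variable {P : Type} [PartialOrder P] {r : P → ℕ} {G : P ⥤ AddCommGrpCat.{0}}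

lemma exists_lift (hr : IsGrading P r) (C C' : CellularForm P r G) {q : ℕ}
    {φ : ∀ x : P, r x < q + 1 → (C.Λ x ≃+ C'.Λ x)} (hφ : Compat C C' (q + 1) φ)
    {x : P} (hx : r x = q + 1) (a : C.Λ x) :
    ∃ b : C'.Λ x, ∀ y, C'.δ x y b =
      if hy : r y < q + 1 then φ y hy (C.δ x y a) else 0 := by
  set c : ∀ y : P, C'.Λ y :=
    fun y => if hy : r y < q + 1 then φ y hy (C.δ x y a) else 0 with hc
  have hcz : ∀ y, C.δ x y a = 0 → c y = 0 := by
    intro y h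
    by_cases hy : r y < q + 1
    · simp only [hc, dif_pos hy, h, map_zero]
    · simp only [hc, dif_neg hy]
  have hcv : ∀ (y) (hy : r y < q + 1), c y = φ y hy (C.δ x y a) := by
    intro y hy
    simp only [hc, dif_pos hy]
  have hfin : {y : P | c y ≠ 0}.Finite :=
    (C.delta_fin x a).subset fun y hy h => hy (hcz y h)
  have hsupp : ∀ y, c y ≠ 0 → y ≤ x ∧ r y = q := by
    intro y hy
    have hd : C.δ x y a ≠ 0 := fun h => hy (hcz y h)
    have hcov : y ⋖ x := by
      by_contra h
      apply hd
      rw [C.delta_support x y h]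
      rfl
    have := hr.cov hcov
    exact ⟨hcov.le, by omega⟩
  have hcyc : ∀ z, (∑ᶠ y : P, C'.δ y z (c y)) = 0 := by
    intro z
    by_cases hz : r z < q + 1
    · have hterm : ∀ y, C'.δ y z (c y) = φ z hz (C.δ y z (C.δ x y a)) := by
        intro y
        by_cases hyc : y ⋖ x
        · have hy : r y < q + 1 := by have := hr.cov hyc; omega
          rw [hcv y hy, ← hφ.1 y z hy hz]
        · have hd : C.δ x y a = 0 := by rw [C.delta_support x y hyc]; rfl
          rw [hcz y hd, hd, map_zero, map_zero, map_zero]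
      have hfin2 : (Function.support fun y => C.δ y z (C.δ x y a)).Finite :=
        (C.delta_fin x a).subset (by
          intro y hy
          simp only [Function.mem_support] at hy
          intro h
          exact hy (by rw [h, map_zero]))
      rw [finsum_congr hterm, ← AddEquiv.map_finsum, C.delta_delta, map_zero]
    · have hterm : ∀ y, C'.δ y z (c y) = 0 := by
        intro y
        by_cases hzy : z ⋖ y
        · have h1 := hr.cov hzy
          have h2 : c y = 0 := by
            by_contra h
            have := (hsupp y h).2
            omega
          rw [h2, map_zero]
        · rw [C'.delta_support y z hzy]; rfl
      rw [finsum_congr hterm, finsum_zero]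
  have hq0 : q = 0 →
      (∑ᶠ y : P, if h : y ≤ x ∧ r y = 0 then C'.e x y h.1 h.2 (c y) else 0) = 0 := by
    intro hq
    subst hq
    have hterm : ∀ y : P, (if h : y ≤ x ∧ r y = 0 then C'.e x y h.1 h.2 (c y) else 0)
        = (if h : y ≤ x ∧ r y = 0 then C.e x y h.1 h.2 (C.δ x y a) else 0) := by
      intro y
      by_cases h : y ≤ x ∧ r y = 0
      · rw [dif_pos h, dif_pos h]
        have hy : r y < 0 + 1 := by omega
        rw [hcv y hy]
        exact hφ.2 x y h.1 h.2 hy (C.δ x y a)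
      · rw [dif_neg h, dif_neg h]
    rw [finsum_congr hterm]
    refine (C.e_ker x (fun y => C.δ x y a) (C.delta_fin x a) ?_).mpr ?_
    · intro y hy
      have hcov : y ⋖ x := by
        by_contra h
        apply hy
        show C.δ x y a = 0
        rw [C.delta_support x y h]
        rfl
      have := hr.cov hcov
      exact ⟨hcov.le, by omega⟩
    · classical
      refine ⟨Pi.single x a, (Set.finite_singleton x).subset ?_, ?_, ?_⟩
      · intro y hy
        by_contra hyx
        exact hy (Pi.single_eq_of_ne hyx a)
      · intro y hy
        rcases eq_or_ne y x with rfl | hyx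
        · exact ⟨le_rfl, hx⟩
        · exact absurd (Pi.single_eq_of_ne hyx a) hy
      · intro y
        rw [finsum_eq_single _ x fun w hw => by rw [Pi.single_eq_of_ne hw, map_zero],
          Pi.single_eq_same]
  exact exists_preimage hr C' x q hx c hfin hsupp hcyc hq0

end LiftSec
section MainSec

variable {P : Type} [PartialOrder P] {r : P → ℕ} {G : P ⥤ AddCommGrpCat.{0}}

lemma exists_compat (hr : IsGrading P r) (C C' : CellularForm P r G) (n : ℕ) :
    ∃ φ : ∀ x : P, r x < n → (C.Λ x ≃+ C'.Λ x), Compat C C' n φ := by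
  induction n with
  | zero =>
      refine ⟨fun x h => absurd h (Nat.not_lt_zero _), ?_, ?_⟩
      · intro x y hx
        exact absurd hx (Nat.not_lt_zero _)
      · intro x y h h0 hy
        exact absurd hy (Nat.not_lt_zero _)
  | succ n ih =>
      obtain ⟨φ, hφ⟩ := ih
      have key : ∀ x : P, r x = n → ∃ E : C.Λ x ≃+ C'.Λ x,
          (∀ (y : P) (hy : r y < n) (a : C.Λ x), C'.δ x y (E a) = φ y hy (C.δ x y a)) ∧
          (∀ (hx0 : r x = 0) (x' : P) (h : x ≤ x') (a : C.Λ x),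
            C'.e x' x h hx0 (E a) = C.e x' x h hx0 a) := by
        intro x hxn
        cases n with
        | zero =>
            set E := (equivE hr C x hxn).trans (equivE hr C' x hxn).symm with hE
            refine ⟨E, fun y hy => absurd hy (Nat.not_lt_zero _), ?_⟩
            intro hx0 x' h a
            have h3 : C'.e x x le_rfl hx0 (E a) = C.e x x le_rfl hx0 a := by
              have h4 : C'.e x x le_rfl hx0 (E a)
                  = equivE hr C' x hxn ((equivE hr C' x hxn).symm (equivE hr C x hxn a)) := rfl
              rw [h4, AddEquiv.apply_symm_apply]
              rfl
            calc C'.e x' x h hx0 (E a)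
                = G.map (homOfLE h) (C'.e x x le_rfl hx0 (E a)) :=
                  (C'.e_natural x x' x le_rfl h hx0 (E a)).symm
              _ = G.map (homOfLE h) (C.e x x le_rfl hx0 a) := by rw [h3]
              _ = C.e x' x h hx0 a := C.e_natural x x' x le_rfl h hx0 a
        | succ q =>
            have hlift := fun a : C.Λ x => exists_lift hr C C' hφ hxn a
            choose F hF using hlift
            have hφs := Compat.symm hφ
            have hlift' := fun b : C'.Λ x => exists_lift hr C' C hφs hxn b
            choose F' hF' using hlift'
            have hdnot : ∀ y, ¬ (r y < q + 1) → ∀ u : C.Λ x, C.δ x y u = 0 := by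
              intro y hy u
              have hnc : ¬ y ⋖ x := fun hc => by have := hr.cov hc; omega
              rw [C.delta_support x y hnc]
              rfl
            have hdnot' : ∀ y, ¬ (r y < q + 1) → ∀ u : C'.Λ x, C'.δ x y u = 0 := by
              intro y hy u
              have hnc : ¬ y ⋖ x := fun hc => by have := hr.cov hc; omega
              rw [C'.delta_support x y hnc]
              rfl
            have hleft : ∀ a, F' (F a) = a := by
              intro a
              refine delta_ext hr C hxn fun y => ?_
              rw [hF' (F a) y]
              by_cases hy : r y < q + 1
              · simp only [dif_pos hy, hF a y, AddEquiv.symm_apply_apply]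
              · rw [dif_neg hy, hdnot y hy a]
            have hright : ∀ b, F (F' b) = b := by
              intro b
              refine delta_ext hr C' hxn fun y => ?_
              rw [hF (F' b) y]
              by_cases hy : r y < q + 1
              · simp only [dif_pos hy, hF' b y, AddEquiv.apply_symm_apply]
              · rw [dif_neg hy, hdnot' y hy b]
            have hadd : ∀ a b, F (a + b) = F a + F b := by
              intro a b
              refine delta_ext hr C' hxn fun y => ?_
              by_cases hy : r y < q + 1
              · simp only [map_add, hF, dif_pos hy]
              · simp only [map_add, hF, dif_neg hy, add_zero]
            refine ⟨{ toFun := F, invFun := F', left_inv := hleft, right_inv := hright,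
                      map_add' := hadd }, ?_, ?_⟩
            · intro y hy a
              show C'.δ x y (F a) = φ y hy (C.δ x y a)
              rw [hF a y, dif_pos hy]
            · intro hx0
              exact absurd hx0 (by omega)
      choose Efam hE1 hE2 using key
      refine ⟨fun x hx => if h : r x < n then φ x h else Efam x (by omega), ?_, ?_⟩
      · intro x y hx hy a
        by_cases hc : y ⋖ x
        · have hrc := hr.cov hc
          have hy' : r y < n := by omega
          by_cases hx' : r x < n
          · simp only [dif_pos hx', dif_pos hy']
            exact hφ.1 x y hx' hy' a
          · have hxn : r x = n := by omega
            simp only [dif_neg hx', dif_pos hy']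
            exact (hE1 x hxn y hy' a).symm
        · have h1 : C.δ x y a = 0 := by rw [C.delta_support x y hc]; rfl
          have h2 : ∀ u : C'.Λ x, C'.δ x y u = 0 := by
            intro u
            rw [C'.delta_support x y hc]
            rfl
          rw [h1, h2, map_zero]
      · intro x y h h0 hy a
        by_cases hy' : r y < n
        · simp only [dif_pos hy']
          exact hφ.2 x y h h0 hy' a
        · have hyn : r y = n := by omega
          simp only [dif_neg hy']
          exact hE2 y hyn h0 x h a

end MainSec
section FinalSec

variable {P : Type} [PartialOrder P] {r : P → ℕ} {G : P ⥤ AddCommGrpCat.{0}}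

lemma compat_unique (hr : IsGrading P r) (C C' : CellularForm P r G) {n m : ℕ}
    {φ : ∀ x : P, r x < n → (C.Λ x ≃+ C'.Λ x)} {ψ : ∀ x : P, r x < m → (C.Λ x ≃+ C'.Λ x)}
    (hφ : Compat C C' n φ) (hψ : Compat C C' m ψ) (x : P) (hn : r x < n) (hm : r x < m)
    (a : C.Λ x) : φ x hn a = ψ x hm a := by
  suffices H : ∀ (k : ℕ) (x : P), r x = k → ∀ (hn : r x < n) (hm : r x < m) (a : C.Λ x),
      φ x hn a = ψ x hm a by
    exact H (r x) x rfl hn hm a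
  intro k
  induction k using Nat.strong_induction_on with
  | _ k IH =>
    rcases k with _ | p
    · intro x hk hn hm a
      have hinj : Function.Injective (C'.e x x le_rfl hk) := (e_self_bijective hr C' x hk).1
      apply hinj
      rw [hφ.2 x x le_rfl hk hn a, hψ.2 x x le_rfl hk hm a]
    · intro x hk hn hm a
      refine delta_ext hr C' hk fun y => ?_
      by_cases hc : y ⋖ x
      · have hrc := hr.cov hc
        have hyn : r y < n := by omega
        have hym : r y < m := by omega
        rw [← hφ.1 x y hn hyn a, ← hψ.1 x y hm hym a]
        exact IH p (by omega) y (by omega) hyn hym (C.δ x y a)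
      · rw [C'.delta_support x y hc]
        rfl

end FinalSec
/-- **Statement 3 (uniqueness of the cellular form).**  Let `P` be a graded poset and `G`
a copresheaf of abelian groups on `P`.  Any two cellular forms `Λ, Λ'` of `(P,G)` are
isomorphic as `P`-graded differential `ℤ`-modules: there are group isomorphisms
`Λ_x ≅ Λ'_x` commuting with the differentials. -/
theorem statement3 (P : Type) [PartialOrder P] (r : P → ℕ) (hr : IsGrading P r)
    (G : P ⥤ AddCommGrpCat.{0}) (C C' : CellularForm P r G) :
    ∃ φ : ∀ x : P, C.Λ x ≃+ C'.Λ x,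
      ∀ (x y : P) (a : C.Λ x), φ y (C.δ x y a) = C'.δ x y (φ x a) := by
  have hex := fun n => exists_compat hr C C' n
  choose Φ hΦ using hex
  refine ⟨fun x => Φ (r x + 1) x (Nat.lt_succ_self _), ?_⟩
  intro x y a
  have hxN : r x < max (r x) (r y) + 1 := Nat.lt_succ_of_le (le_max_left _ _)
  have hyN : r y < max (r x) (r y) + 1 := Nat.lt_succ_of_le (le_max_right _ _)
  have h1 := (hΦ (max (r x) (r y) + 1)).1 x y hxN hyN a
  rw [compat_unique hr C C' (hΦ (r y + 1)) (hΦ (max (r x) (r y) + 1)) y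
        (Nat.lt_succ_self _) hyN (C.δ x y a),
      compat_unique hr C C' (hΦ (r x + 1)) (hΦ (max (r x) (r y) + 1)) x
        (Nat.lt_succ_self _) hxN a]
  exact h1
end

section
/- Let P be a graded poset and G a copresheaf of abelian groups on P such that (P,G) admits a cellular form. Let Λ be a P-graded ℤ-module equipped with maps ∂ : Λ_x → ⊕_{y⋖x} Λ_y satisfying ∂∂ = 0 and: (1) Λ_{x₀} = G(x₀) for every rank-0 element x₀; (2) for every rank-1 element x₁, Λ_{x₁} = ker(⊕_{y<x₁} G(y) → G(x₁)) and ∂ on Λ_{x₁} is this inclusion into ⊕_{y<x₁} G(y) = ⊕_{y<x₁} Λ_y; (3) for every x with r(x) > 1, the sequence 0 → Λ_x → ⊕_{y⋖x} Λ_y → ⊕_{y<x, r(y)=r(x)−2} Λ_y (both maps given by ∂) is exact. Then Λ is a cellular form of (P,G). -/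
open CategoryTheory Classical

/-! ### Auxiliary development for `statement10` -/

/-- Bundle of all the data and hypotheses of `statement10`. -/
structure S10 (P : Type) [PartialOrder P] (r : P → ℕ) (G : P ⥤ AddCommGrpCat.{0}) where
  (hr : IsGrading P r)
  (C₀ : CellularForm P r G)
  (Λ : P → Type)
  [inst : ∀ x, AddCommGroup (Λ x)]
  (δ : ∀ x y : P, Λ x →+ Λ y)
  (hsupp : ∀ x y : P, ¬(y ⋖ x) → δ x y = 0)
  (hfin : ∀ (x : P) (a : Λ x), {y : P | δ x y a ≠ 0}.Finite)
  (hdd : ∀ (x z : P) (a : Λ x), (∑ᶠ y : P, δ y z (δ x y a)) = 0)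
  (e0 : ∀ x : P, r x = 0 → (Λ x ≃+ G.obj x))
  (h2a : ∀ x : P, r x = 1 → ∀ a a' : Λ x, (∀ y, δ x y a = δ x y a') → a = a')
  (h2b : ∀ x : P, r x = 1 → ∀ a : Λ x,
    (∑ᶠ y : P, if h : y < x ∧ r y = 0 then
      G.map (homOfLE h.1.le) (e0 y h.2 (δ x y a)) else 0) = 0)
  (h2c : ∀ x : P, r x = 1 → ∀ g : ∀ y : P, G.obj y, {y : P | g y ≠ 0}.Finite →
    (∀ y, g y ≠ 0 → y < x) →
    (∑ᶠ y : P, if h : y < x then G.map (homOfLE h.le) (g y) else 0) = 0 →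
    ∃ a : Λ x, ∀ (y : P) (_ : y < x) (h0 : r y = 0), e0 y h0 (δ x y a) = g y)
  (h3a : ∀ x : P, 1 < r x → ∀ a a' : Λ x, (∀ y, δ x y a = δ x y a') → a = a')
  (h3b : ∀ x : P, 1 < r x → ∀ a : ∀ y : P, Λ y, {y : P | a y ≠ 0}.Finite →
    (∀ y, a y ≠ 0 → y ⋖ x) → (∀ z, (∑ᶠ y : P, δ y z (a y)) = 0) →
    ∃ b : Λ x, ∀ y, a y = δ x y b)

attribute [instance] S10.inst

namespace S10

variable {P : Type} [PartialOrder P] {r : P → ℕ} {G : P ⥤ AddCommGrpCat.{0}}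

lemma cov_rank (S : S10 P r G) {z x : P} (h : z ⋖ x) : r x = r z + 1 := S.hr.2.1 z x h

lemma rank_le (S : S10 P r G) {y x : P} (h : y ≤ x) : r y ≤ r x := by
  rcases eq_or_lt_of_le h with rfl | h
  · exact le_rfl
  · exact (S.hr.2.2 _ _ h).le

lemma eq_of_le_rank (S : S10 P r G) {y x : P} (h : y ≤ x) (he : r y = r x) : y = x := by
  rcases eq_or_lt_of_le h with rfl | h
  · rfl
  · exact absurd he (S.hr.2.2 _ _ h).ne

lemma cov_of_lt (S : S10 P r G) {y x : P} (h : y < x) (he : r y + 1 = r x) : y ⋖ x := by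
  refine ⟨h, fun z hz hz' => ?_⟩
  have h1 := S.hr.2.2 _ _ hz
  have h2 := S.hr.2.2 _ _ hz'
  omega

/-- The comparison map from the given cellular form `C₀` to `Λ`, defined by recursion on
the rank. -/
noncomputable def ff (S : S10 P r G) (x : P) (c : S.C₀.Λ x) : S.Λ x :=
  if h0 : r x = 0 then (S.e0 x h0).symm (S.C₀.e x x le_rfl h0 c)
  else if c = 0 then 0
  else if h : ∃ b : S.Λ x, ∀ z, z ⋖ x → S.δ x z b = ff S z (S.C₀.δ x z c) then
    h.choose
  else 0
termination_by r x
decreasing_by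
  all_goals rename_i hzx
  all_goals have := S.hr.2.1 _ _ hzx
  all_goals omega

lemma ff_rank0 (S : S10 P r G) (x : P) (h0 : r x = 0) (c : S.C₀.Λ x) :
    S.ff x c = (S.e0 x h0).symm (S.C₀.e x x le_rfl h0 c) := by
  rw [ff, dif_pos h0]

lemma ff_zero (S : S10 P r G) (x : P) : S.ff x 0 = 0 := by
  rw [ff]
  split_ifs with h0 h1 h2
  · simp
  · rfl
  · exact absurd rfl h1
  · exact absurd rfl h1

lemma ff_spec (S : S10 P r G) (x : P) (h0 : ¬ r x = 0) (c : S.C₀.Λ x) (hc : c ≠ 0)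
    (h : ∃ b : S.Λ x, ∀ z, z ⋖ x → S.δ x z b = S.ff z (S.C₀.δ x z c)) :
    ∀ z, z ⋖ x → S.δ x z (S.ff x c) = S.ff z (S.C₀.δ x z c) := by
  rw [ff, dif_neg h0, if_neg hc, dif_pos h]
  exact h.choose_spec

end S10

namespace S10

variable {P : Type} [PartialOrder P] {r : P → ℕ} {G : P ⥤ AddCommGrpCat.{0}}

lemma finsum_eq_of_single {ι : Type} {β : ι → Type} [∀ i, AddCommMonoid (β i)] {M : Type}
    [AddCommMonoid M] (g : ∀ i, β i →+ M) (b : ∀ i, β i) (x : ι)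
    (hb : ∀ w, w ≠ x → b w = 0) : (∑ᶠ w, g w (b w)) = g x (b x) := by
  refine finsum_eq_single _ x fun w hw => ?_
  rw [hb w hw]
  exact map_zero _

lemma good (S : S10 P r G) : ∀ (n : ℕ) (x : P), r x = n →
    (∀ z c, S.δ x z (S.ff x c) = S.ff z (S.C₀.δ x z c)) ∧
    (∀ c c', S.ff x (c + c') = S.ff x c + S.ff x c') ∧
    Function.Bijective (S.ff x) := by
  intro n
  induction n using Nat.strong_induction_on with
  | _ n IH =>
  intro x hx
  rcases Nat.eq_zero_or_pos n with hn0 | hnpos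
  · -- rank 0 case
    subst hn0
    have hnocov : ∀ z : P, ¬z ⋖ x := by
      intro z hz
      have := S.hr.2.1 _ _ hz
      omega
    have chain : ∀ z c, S.δ x z (S.ff x c) = S.ff z (S.C₀.δ x z c) := by
      intro z c
      rw [S.hsupp x z (hnocov z), S.C₀.delta_support x z (hnocov z)]
      simp [S.ff_zero]
    have key : ∀ c0 : S.C₀.Λ x, S.C₀.e x x le_rfl hx c0 = 0 → c0 = 0 := by
      intro c0 hc0
      have haane : ∀ w, w ≠ x → Function.update (fun y => (0 : S.C₀.Λ y)) x c0 w = 0 :=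
        fun w hw => Function.update_of_ne hw c0 _
      have afin : {y : P | Function.update (fun y => (0 : S.C₀.Λ y)) x c0 y ≠ 0}.Finite := by
        refine (Set.finite_singleton x).subset ?_
        intro y hy
        by_contra hne
        exact hy (haane y hne)
      have acond : ∀ y, Function.update (fun y => (0 : S.C₀.Λ y)) x c0 y ≠ 0 → y ≤ x ∧ r y = 0 := by
        intro y hy
        by_cases hyx : y = x
        · subst hyx; exact ⟨le_rfl, hx⟩
        · exact absurd (haane y hyx) hy
      have hsum : (∑ᶠ y : P, if h : y ≤ x ∧ r y = 0 then
          S.C₀.e x y h.1 h.2 (Function.update (fun y => (0 : S.C₀.Λ y)) x c0 y) else 0) = 0 := by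
        rw [finsum_eq_single _ x]
        · rw [dif_pos (⟨le_rfl, hx⟩ : x ≤ x ∧ r x = 0), Function.update_self]
          exact hc0
        · intro w hw
          exact dif_neg (by rintro ⟨hw1, hw2⟩; exact hw (S.eq_of_le_rank hw1 (by rw [hw2, hx])))
      obtain ⟨b, bfin, bcond, beq⟩ := (S.C₀.e_ker x _ afin acond).mp hsum
      have hb0 : ∀ w, b w = 0 := by
        intro w
        by_contra hbw
        obtain ⟨hw1, hw2⟩ := bcond w hbw
        have := S.rank_le hw1
        omega
      have hc0' : c0 = ∑ᶠ w : P, S.C₀.δ w x (b w) := by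
        have := beq x
        rwa [Function.update_self] at this
      rw [hc0']
      exact finsum_eq_zero_of_forall_eq_zero fun w => by rw [hb0 w]; exact map_zero _
    have Einj : Function.Injective (S.C₀.e x x le_rfl hx) := by
      intro c c' hcc
      have h0 : S.C₀.e x x le_rfl hx (c - c') = 0 := by
        rw [map_sub, hcc, sub_self]
      exact sub_eq_zero.mp (key _ h0)
    have Esurj : Function.Surjective (S.C₀.e x x le_rfl hx) := by
      intro g
      obtain ⟨a, afin, acond, asum⟩ := S.C₀.e_surj x g
      refine ⟨a x, ?_⟩
      have hh : (∑ᶠ y : P, if h : y ≤ x ∧ r y = 0 then S.C₀.e x y h.1 h.2 (a y) else 0)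
          = S.C₀.e x x le_rfl hx (a x) := by
        rw [finsum_eq_single _ x]
        · rw [dif_pos (⟨le_rfl, hx⟩ : x ≤ x ∧ r x = 0)]
        · intro w hw
          exact dif_neg (by rintro ⟨hw1, hw2⟩; exact hw (S.eq_of_le_rank hw1 (by rw [hw2, hx])))
      rw [← hh, asum]
    have hffx : S.ff x = fun c => (S.e0 x hx).symm (S.C₀.e x x le_rfl hx c) :=
      funext fun c => S.ff_rank0 x hx c
    refine ⟨chain, ?_, ?_⟩
    · intro c c'
      simp [S.ff_rank0 x hx, map_add]
    · rw [hffx]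
      exact (S.e0 x hx).symm.bijective.comp ⟨Einj, Esurj⟩
  · -- positive rank case
    have hx0 : ¬r x = 0 := by omega
    have hinjx : ∀ a a' : S.Λ x, (∀ y, S.δ x y a = S.δ x y a') → a = a' := by
      rcases (by omega : r x = 1 ∨ 1 < r x) with h1 | h1
      exacts [S.h2a x h1, S.h3a x h1]
    have IHfull : ∀ w : P, r w < n →
        (∀ z c, S.δ w z (S.ff w c) = S.ff z (S.C₀.δ w z c)) ∧
        (∀ c c', S.ff w (c + c') = S.ff w c + S.ff w c') ∧
        Function.Bijective (S.ff w) := fun w hw => IH (r w) hw w rfl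
    have covrank : ∀ z : P, z ⋖ x → r z + 1 = n := by
      intro z hz
      have := S.hr.2.1 _ _ hz
      omega
    have hex : ∀ c : S.C₀.Λ x,
        ∃ b : S.Λ x, ∀ z, z ⋖ x → S.δ x z b = S.ff z (S.C₀.δ x z c) := by
      intro c
      have fact1 : ∀ z : P, S.ff z (S.C₀.δ x z c) ≠ 0 → z ⋖ x := by
        intro z hz
        by_contra hzx
        exact hz (by rw [S.C₀.delta_support x z hzx]; simp [S.ff_zero])
      have fact2 : {z : P | S.ff z (S.C₀.δ x z c) ≠ 0}.Finite := by
        refine (S.C₀.delta_fin x c).subset ?_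
        intro z hz
        by_contra h0
        exact hz (by rw [not_not.mp h0]; exact S.ff_zero z)
      rcases (by omega : n = 1 ∨ 2 ≤ n) with h1 | h2
      · -- rank 1 : use h2c
        have hx1 : r x = 1 := by omega
        set g : ∀ y : P, G.obj y := fun y =>
          if h0 : r y = 0 then S.C₀.e y y le_rfl h0 (S.C₀.δ x y c) else 0 with hg
        have gzero : ∀ y, S.C₀.δ x y c = 0 → g y = 0 := by
          intro y h0
          simp only [hg]
          rw [h0]
          split_ifs with hy0
          · exact map_zero _
          · rfl
        have gfin : {y : P | g y ≠ 0}.Finite := by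
          refine (S.C₀.delta_fin x c).subset ?_
          intro y hy
          by_contra h0
          exact hy (gzero y (not_not.mp h0))
        have gless : ∀ y, g y ≠ 0 → y < x := by
          intro y hy
          have hδ : S.C₀.δ x y c ≠ 0 := fun h0 => hy (gzero y h0)
          have hyx : y ⋖ x := by
            by_contra h0
            exact hδ (by rw [S.C₀.delta_support x y h0]; rfl)
          exact hyx.lt
        have gsum : (∑ᶠ y : P, if h : y < x then G.map (homOfLE h.le) (g y) else 0) = 0 := by
          have hker : (∑ᶠ y : P, if h : y ≤ x ∧ r y = 0 then
              S.C₀.e x y h.1 h.2 (S.C₀.δ x y c) else 0) = 0 := by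
            refine (S.C₀.e_ker x (fun y => S.C₀.δ x y c) (S.C₀.delta_fin x c) ?_).mpr ?_
            · intro y hy
              have hyx : y ⋖ x := by
                by_contra h0
                exact hy (show S.C₀.δ x y c = 0 by rw [S.C₀.delta_support x y h0]; rfl)
              refine ⟨hyx.lt.le, ?_⟩
              have := covrank y hyx
              omega
            · refine ⟨Function.update (fun y => (0 : S.C₀.Λ y)) x c, ?_, ?_, ?_⟩
              · refine (Set.finite_singleton x).subset ?_
                intro y hy
                by_contra hne
                exact hy (Function.update_of_ne hne c _)
              · intro y hy
                by_cases hyx : y = x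
                · subst hyx; exact ⟨le_rfl, hx1⟩
                · exact absurd (Function.update_of_ne hyx c _) hy
              · intro y
                rw [finsum_eq_of_single (fun w => S.C₀.δ w y) _ x
                  (fun w hw => Function.update_of_ne hw c _), Function.update_self]
          refine Eq.trans (finsum_congr fun y => ?_) hker
          by_cases hδ : S.C₀.δ x y c = 0
          · by_cases h1' : y < x
            · rw [dif_pos h1', gzero y hδ]
              by_cases h2' : y ≤ x ∧ r y = 0
              · rw [dif_pos h2', hδ]
                simp
              · rw [dif_neg h2']
                simp
            · rw [dif_neg h1']
              by_cases h2' : y ≤ x ∧ r y = 0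
              · rw [dif_pos h2', hδ, map_zero]
              · rw [dif_neg h2']
          · have hyx : y ⋖ x := by
              by_contra h0
              exact hδ (by rw [S.C₀.delta_support x y h0]; rfl)
            have hy0 : r y = 0 := by
              have := covrank y hyx
              omega
            rw [dif_pos hyx.lt, dif_pos (⟨hyx.lt.le, hy0⟩ : y ≤ x ∧ r y = 0)]
            show G.map (homOfLE hyx.lt.le) (g y) = S.C₀.e x y hyx.lt.le hy0 (S.C₀.δ x y c)
            have hgy : g y = S.C₀.e y y le_rfl hy0 (S.C₀.δ x y c) := by
              simp only [hg]
              rw [dif_pos hy0]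
            rw [hgy]
            exact S.C₀.e_natural y x y le_rfl hyx.lt.le hy0 (S.C₀.δ x y c)
        obtain ⟨b, hb⟩ := S.h2c x hx1 g gfin gless gsum
        refine ⟨b, fun z hz => ?_⟩
        have hz0 : r z = 0 := by
          have := covrank z hz
          omega
        rw [S.ff_rank0 z hz0]
        apply (S.e0 z hz0).injective
        rw [AddEquiv.apply_symm_apply, hb z hz.lt hz0]
        simp only [hg]
        rw [dif_pos hz0]
      · -- rank ≥ 2 : use h3b
        have hx2 : 1 < r x := by omega
        refine (S.h3b x hx2 (fun z => S.ff z (S.C₀.δ x z c)) fact2 fact1 ?_).imp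
          (fun b hb z _ => (hb z).symm)
        intro w
        by_cases hw : r w + 2 = n
        · have hwlt : r w < n := by omega
          set Fw : S.C₀.Λ w →+ S.Λ w := AddMonoidHom.mk' (S.ff w) (IHfull w hwlt).2.1 with hFw
          have hsfin : (Function.support fun z => S.C₀.δ z w (S.C₀.δ x z c)).Finite := by
            refine (S.C₀.delta_fin x c).subset ?_
            intro z hz
            by_contra h0
            refine hz ?_
            show S.C₀.δ z w (S.C₀.δ x z c) = 0
            rw [not_not.mp h0]
            exact map_zero _
          have step1 : ∀ z : P, S.δ z w (S.ff z (S.C₀.δ x z c)) = Fw (S.C₀.δ z w (S.C₀.δ x z c)) := by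
            intro z
            by_cases hzx : z ⋖ x
            · have hzlt : r z < n := by
                have := covrank z hzx
                omega
              exact (IHfull z hzlt).1 w (S.C₀.δ x z c)
            · rw [S.C₀.delta_support x z hzx]
              simp [S.ff_zero, hFw]
          calc (∑ᶠ z : P, S.δ z w (S.ff z (S.C₀.δ x z c)))
              = ∑ᶠ z : P, Fw (S.C₀.δ z w (S.C₀.δ x z c)) := finsum_congr step1
            _ = Fw (∑ᶠ z : P, S.C₀.δ z w (S.C₀.δ x z c)) := (AddMonoidHom.map_finsum Fw hsfin).symm
            _ = 0 := by rw [S.C₀.delta_delta x w c, map_zero]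
        · refine finsum_eq_zero_of_forall_eq_zero fun z => ?_
          show S.δ z w (S.ff z (S.C₀.δ x z c)) = 0
          by_cases haz : S.ff z (S.C₀.δ x z c) = 0
          · rw [haz]
            exact map_zero _
          · have hzx := fact1 z haz
            have h1' := covrank z hzx
            by_cases hwz : w ⋖ z
            · exfalso
              have := S.hr.2.1 _ _ hwz
              omega
            · rw [S.hsupp z w hwz]
              rfl
    have chain : ∀ z c, S.δ x z (S.ff x c) = S.ff z (S.C₀.δ x z c) := by
      intro z c
      by_cases hc : c = 0
      · subst hc
        rw [S.ff_zero]
        simp [S.ff_zero]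
      · by_cases hzx : z ⋖ x
        · exact S.ff_spec x hx0 c hc (hex c) z hzx
        · rw [S.hsupp x z hzx, S.C₀.delta_support x z hzx]
          simp [S.ff_zero]
    have addx : ∀ c c', S.ff x (c + c') = S.ff x c + S.ff x c' := by
      intro c c'
      refine hinjx _ _ fun y => ?_
      by_cases hyx : y ⋖ x
      · have hylt : r y < n := by
          have := covrank y hyx
          omega
        rw [chain y (c + c'), map_add, map_add, (IHfull y hylt).2.1, ← chain y c, ← chain y c']
      · rw [S.hsupp x y hyx]
        rfl
    have injx : Function.Injective (S.ff x) := by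
      have key : ∀ c, S.ff x c = 0 → c = 0 := by
        intro c hc
        have hδc : ∀ z, S.C₀.δ x z c = 0 := by
          intro z
          by_cases hzx : z ⋖ x
          · have hzlt : r z < n := by
              have := covrank z hzx
              omega
            refine (IHfull z hzlt).2.2.1 ?_
            have h1' : S.ff z (S.C₀.δ x z c) = 0 := by
              rw [← chain z c, hc, map_zero]
            rw [h1', S.ff_zero]
          · rw [S.C₀.delta_support x z hzx]
            rfl
        have hupd : ∀ w, w ≠ x → Function.update (fun y => (0 : S.C₀.Λ y)) x c w = 0 :=
          fun w hw => Function.update_of_ne hw c _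
        obtain ⟨b, bfin, bcond, beq⟩ := S.C₀.exact_pos x (n - 1)
          (Function.update (fun y => (0 : S.C₀.Λ y)) x c)
          (by
            refine (Set.finite_singleton x).subset ?_
            intro y hy
            by_contra hne
            exact hy (hupd y hne))
          (by
            intro y hy
            by_cases hyx : y = x
            · subst hyx
              exact ⟨le_rfl, by omega⟩
            · exact absurd (hupd y hyx) hy)
          (by
            intro z
            rw [finsum_eq_of_single (fun w => S.C₀.δ w z) _ x (fun w hw => hupd w hw),
              Function.update_self]
            exact hδc z)
        have hb0 : ∀ w, b w = 0 := by
          intro w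
          by_contra hbw
          obtain ⟨hw1, hw2⟩ := bcond w hbw
          have := S.rank_le hw1
          omega
        have hcx : c = ∑ᶠ w : P, S.C₀.δ w x (b w) := by
          have := beq x
          rwa [Function.update_self] at this
        rw [hcx]
        exact finsum_eq_zero_of_forall_eq_zero fun w => by rw [hb0 w]; exact map_zero _
      intro c c' hcc
      have h0 : S.ff x (c - c') = 0 := by
        have hsub : S.ff x (c - c') + S.ff x c' = S.ff x c := by
          rw [← addx, sub_add_cancel]
        have : S.ff x (c - c') = S.ff x c - S.ff x c' := by
          rw [← hsub]
          abel
        rw [this, hcc, sub_self]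
      exact sub_eq_zero.mp (key _ h0)
    have surjx : Function.Surjective (S.ff x) := by
      intro a
      set k : ∀ w : P, S.C₀.Λ w := fun w =>
        if h : w ⋖ x ∧ S.δ x w a ≠ 0 then
          ((IHfull w (by have := covrank w h.1; omega)).2.2.2 (S.δ x w a)).choose
        else 0 with hk
      have kzero : ∀ w, ¬w ⋖ x → k w = 0 := by
        intro w hw
        simp only [hk]
        rw [dif_neg (by rintro ⟨h, -⟩; exact hw h)]
      have kspec : ∀ w, w ⋖ x → S.ff w (k w) = S.δ x w a := by
        intro w hw
        by_cases hδ : S.δ x w a = 0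
        · simp only [hk]
          rw [dif_neg (by rintro ⟨-, h⟩; exact h hδ), S.ff_zero, hδ]
        · simp only [hk]
          rw [dif_pos (⟨hw, hδ⟩ : w ⋖ x ∧ S.δ x w a ≠ 0)]
          exact ((IHfull w (by have := covrank w hw; omega)).2.2.2 (S.δ x w a)).choose_spec
      have kfin : {w : P | k w ≠ 0}.Finite := by
        refine (S.hfin x a).subset ?_
        intro w hw
        by_contra h0
        refine hw ?_
        simp only [hk]
        rw [dif_neg (by rintro ⟨-, h⟩; exact h (not_not.mp h0))]
      have kcov : ∀ w, k w ≠ 0 → w ⋖ x := by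
        intro w hw
        by_contra h0
        exact hw (kzero w h0)
      have kcycle : ∀ v, (∑ᶠ w : P, S.C₀.δ w v (k w)) = 0 := by
        intro v
        by_cases hv : r v + 2 = n
        · have hvlt : r v < n := by omega
          apply (IHfull v hvlt).2.2.1
          set Fv : S.C₀.Λ v →+ S.Λ v := AddMonoidHom.mk' (S.ff v) (IHfull v hvlt).2.1 with hFv
          have hsfin : (Function.support fun w => S.C₀.δ w v (k w)).Finite := by
            refine kfin.subset ?_
            intro w hw
            by_contra h0
            refine hw ?_
            show S.C₀.δ w v (k w) = 0
            rw [not_not.mp h0]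
            exact map_zero _
          show S.ff v (∑ᶠ w : P, S.C₀.δ w v (k w)) = S.ff v 0
      -- chain of equalities
          calc S.ff v (∑ᶠ w : P, S.C₀.δ w v (k w))
              = Fv (∑ᶠ w : P, S.C₀.δ w v (k w)) := rfl
            _ = ∑ᶠ w : P, Fv (S.C₀.δ w v (k w)) := AddMonoidHom.map_finsum Fv hsfin
            _ = ∑ᶠ w : P, S.δ w v (S.ff w (k w)) := by
                refine finsum_congr fun w => ?_
                by_cases hkw : k w = 0
                · rw [hkw]
                  simp [S.ff_zero, hFv]
                · have hw := kcov w hkw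
                  have hwlt : r w < n := by
                    have := covrank w hw
                    omega
                  exact ((IHfull w hwlt).1 v (k w)).symm
            _ = ∑ᶠ w : P, S.δ w v (S.δ x w a) := by
                refine finsum_congr fun w => ?_
                by_cases hw : w ⋖ x
                · rw [kspec w hw]
                · rw [kzero w hw, S.ff_zero, S.hsupp x w hw]
                  rfl
            _ = 0 := S.hdd x v a
            _ = S.ff v 0 := (S.ff_zero v).symm
        · refine finsum_eq_zero_of_forall_eq_zero fun w => ?_
          by_cases hkw : k w = 0
          · rw [hkw]
            exact map_zero _
          · have hw := kcov w hkw
            have h1' := covrank w hw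
            by_cases hvw : v ⋖ w
            · exfalso
              have := S.hr.2.1 _ _ hvw
              omega
            · rw [S.C₀.delta_support w v hvw]
              rfl
      rcases (by omega : n = 1 ∨ 2 ≤ n) with h1 | h2
      · -- rank 1
        have hx1 : r x = 1 := by omega
        have kcond : ∀ w, k w ≠ 0 → w ≤ x ∧ r w = 0 := by
          intro w hw
          have hc := kcov w hw
          exact ⟨hc.lt.le, by have := covrank w hc; omega⟩
        have hsum : (∑ᶠ y : P, if h : y ≤ x ∧ r y = 0 then S.C₀.e x y h.1 h.2 (k y) else 0) = 0 := by
          refine Eq.trans (finsum_congr fun y => ?_) (S.h2b x hx1 a)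
          by_cases hky : k y = 0
          · by_cases hc1 : y ≤ x ∧ r y = 0
            · rw [dif_pos hc1, hky, map_zero]
              by_cases hc2 : y < x ∧ r y = 0
              · rw [dif_pos hc2]
                have hyx : y ⋖ x := S.cov_of_lt hc2.1 (by rw [hc2.2, hx1])
                have hδ : S.δ x y a = 0 := by
                  by_contra h0
                  have hks := kspec y hyx
                  rw [hky, S.ff_zero] at hks
                  exact h0 hks.symm
                show (0 : G.obj x) = G.map (homOfLE hc2.1.le) ((S.e0 y hc2.2) (S.δ x y a))
                rw [hδ]
                simp
              · rw [dif_neg hc2]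
            · rw [dif_neg hc1]
              by_cases hc2 : y < x ∧ r y = 0
              · exact absurd ⟨hc2.1.le, hc2.2⟩ hc1
              · rw [dif_neg hc2]
          · have hyx := kcov y hky
            have hy0 : r y = 0 := by have := covrank y hyx; omega
            rw [dif_pos (⟨hyx.lt.le, hy0⟩ : y ≤ x ∧ r y = 0), dif_pos (⟨hyx.lt, hy0⟩ : y < x ∧ r y = 0)]
            show S.C₀.e x y hyx.lt.le hy0 (k y) = G.map (homOfLE hyx.lt.le) ((S.e0 y hy0) (S.δ x y a))
            have e1 : (S.e0 y hy0) (S.δ x y a) = S.C₀.e y y le_rfl hy0 (k y) := by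
              rw [← kspec y hyx, S.ff_rank0 y hy0, AddEquiv.apply_symm_apply]
            rw [e1]
            exact (S.C₀.e_natural y x y le_rfl hyx.lt.le hy0 (k y)).symm
        obtain ⟨b, bfin, bcond, beq⟩ := (S.C₀.e_ker x k kfin kcond).mp hsum
        have hbx : ∀ w, w ≠ x → b w = 0 := by
          intro w hw
          by_contra h0
          obtain ⟨h1', h2'⟩ := bcond w h0
          exact hw (S.eq_of_le_rank h1' (by omega))
        refine ⟨b x, hinjx _ _ fun y => ?_⟩
        by_cases hyx : y ⋖ x
        · rw [chain y (b x)]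
          have hkb : S.C₀.δ x y (b x) = k y :=
            ((beq y).trans (finsum_eq_of_single (fun w => S.C₀.δ w y) b x hbx)).symm
          rw [hkb, kspec y hyx]
        · rw [S.hsupp x y hyx]
          rfl
      · -- rank ≥ 2
        have kcond : ∀ w, k w ≠ 0 → w ≤ x ∧ r w = (n - 2) + 1 := by
          intro w hw
          have hc := kcov w hw
          have := covrank w hc
          exact ⟨hc.lt.le, by omega⟩
        obtain ⟨b, bfin, bcond, beq⟩ := S.C₀.exact_pos x (n - 2) k kfin kcond kcycle
        have hbx : ∀ w, w ≠ x → b w = 0 := by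
          intro w hw
          by_contra h0
          obtain ⟨h1', h2'⟩ := bcond w h0
          exact hw (S.eq_of_le_rank h1' (by omega))
        refine ⟨b x, hinjx _ _ fun y => ?_⟩
        by_cases hyx : y ⋖ x
        · rw [chain y (b x)]
          have hkb : S.C₀.δ x y (b x) = k y :=
            ((beq y).trans (finsum_eq_of_single (fun w => S.C₀.δ w y) b x hbx)).symm
          rw [hkb, kspec y hyx]
        · rw [S.hsupp x y hyx]
          rfl
    exact ⟨chain, addx, injx, surjx⟩

end S10

namespace S10

variable {P : Type} [PartialOrder P] {r : P → ℕ} {G : P ⥤ AddCommGrpCat.{0}}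

lemma chain (S : S10 P r G) (x z : P) (c : S.C₀.Λ x) :
    S.δ x z (S.ff x c) = S.ff z (S.C₀.δ x z c) :=
  (S.good (r x) x rfl).1 z c

/-- The comparison map as an additive equivalence. -/
noncomputable def FE (S : S10 P r G) (x : P) : S.C₀.Λ x ≃+ S.Λ x :=
  AddEquiv.ofBijective (AddMonoidHom.mk' (S.ff x) ((S.good (r x) x rfl).2.1))
    ((S.good (r x) x rfl).2.2)

lemma gg_ff (S : S10 P r G) (x : P) (a : S.Λ x) : S.ff x ((S.FE x).symm a) = a :=
  (S.FE x).apply_symm_apply a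

lemma ff_inj (S : S10 P r G) (x : P) : Function.Injective (S.ff x) :=
  (S.good (r x) x rfl).2.2.1

lemma chain_finsum (S : S10 P r G) (b : ∀ w : P, S.C₀.Λ w) (hb : {w : P | b w ≠ 0}.Finite)
    (y : P) : S.ff y (∑ᶠ w : P, S.C₀.δ w y (b w)) = ∑ᶠ w : P, S.δ w y (S.ff w (b w)) := by
  have hsfin : (Function.support fun w => S.C₀.δ w y (b w)).Finite := by
    refine hb.subset ?_
    intro w hw
    by_contra h0
    refine hw ?_
    show S.C₀.δ w y (b w) = 0
    rw [not_not.mp h0]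
    exact map_zero _
  calc S.ff y (∑ᶠ w : P, S.C₀.δ w y (b w))
      = ∑ᶠ w : P, S.ff y (S.C₀.δ w y (b w)) :=
        AddMonoidHom.map_finsum (AddMonoidHom.mk' (S.ff y) ((S.good (r y) y rfl).2.1)) hsfin
    _ = ∑ᶠ w : P, S.δ w y (S.ff w (b w)) := finsum_congr fun w => (S.chain w y (b w)).symm

theorem main (S : S10 P r G) : IsCellularForm P r G S.Λ S.δ := by
  refine ⟨S.hsupp, S.hfin, S.hdd, ?_, ?_⟩
  · -- exact_pos
    intro x q a hafin hacond hacyc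
    set c : ∀ y : P, S.C₀.Λ y := fun y => (S.FE y).symm (a y) with hc
    have hcc : ∀ y, S.ff y (c y) = a y := fun y => S.gg_ff y (a y)
    have hcfin : {y : P | c y ≠ 0}.Finite := by
      refine hafin.subset ?_
      intro y hy
      by_contra h0
      refine hy ?_
      show (S.FE y).symm (a y) = 0
      rw [not_not.mp h0]
      exact map_zero _
    have hccond : ∀ y, c y ≠ 0 → y ≤ x ∧ r y = q + 1 := by
      intro y hy
      refine hacond y fun h0 => hy ?_
      show (S.FE y).symm (a y) = 0
      rw [h0]
      exact map_zero _
    have hccyc : ∀ z, (∑ᶠ y : P, S.C₀.δ y z (c y)) = 0 := by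
      intro z
      apply S.ff_inj z
      calc S.ff z (∑ᶠ y : P, S.C₀.δ y z (c y))
          = ∑ᶠ y : P, S.δ y z (S.ff y (c y)) := S.chain_finsum c hcfin z
        _ = ∑ᶠ y : P, S.δ y z (a y) := finsum_congr fun y => by rw [hcc y]
        _ = 0 := hacyc z
        _ = S.ff z 0 := (S.ff_zero z).symm
    obtain ⟨b, hbfin, hbcond, hbeq⟩ := S.C₀.exact_pos x q c hcfin hccond hccyc
    refine ⟨fun y => S.ff y (b y), ?_, ?_, ?_⟩
    · refine hbfin.subset ?_
      intro y hy
      by_contra h0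
      refine hy ?_
      show S.ff y (b y) = 0
      rw [not_not.mp h0]
      exact S.ff_zero y
    · intro y hy
      refine hbcond y fun h0 => hy ?_
      show S.ff y (b y) = 0
      rw [h0]
      exact S.ff_zero y
    · intro y
      show a y = ∑ᶠ w : P, S.δ w y (S.ff w (b w))
      rw [← hcc y, hbeq y]
      exact S.chain_finsum b hbfin y
  · -- hom_zero
    refine ⟨fun x y h h0 =>
      AddMonoidHom.comp (show G.obj y →+ G.obj x from (G.map (homOfLE h)).hom)
        (S.e0 y h0).toAddMonoidHom, ?_, ?_, ?_⟩
    · intro x x' y h h' h0 a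
      show G.map (homOfLE h') (G.map (homOfLE h) ((S.e0 y h0) a))
          = G.map (homOfLE (h.trans h')) ((S.e0 y h0) a)
      rw [← homOfLE_comp h h', G.map_comp]
      rfl
    · intro x g
      obtain ⟨a, afin, acond, asum⟩ := S.C₀.e_surj x g
      refine ⟨fun y => S.ff y (a y), ?_, ?_, ?_⟩
      · refine afin.subset ?_
        intro y hy
        by_contra h0
        refine hy ?_
        show S.ff y (a y) = 0
        rw [not_not.mp h0]
        exact S.ff_zero y
      · intro y hy
        refine acond y fun h0 => hy ?_
        show S.ff y (a y) = 0
        rw [h0]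
        exact S.ff_zero y
      · refine Eq.trans (finsum_congr fun y => ?_) asum
        by_cases hcond : y ≤ x ∧ r y = 0
        · rw [dif_pos hcond, dif_pos hcond]
          show G.map (homOfLE hcond.1) ((S.e0 y hcond.2) (S.ff y (a y)))
              = S.C₀.e x y hcond.1 hcond.2 (a y)
          have h1 : (S.e0 y hcond.2) (S.ff y (a y)) = S.C₀.e y y le_rfl hcond.2 (a y) := by
            rw [S.ff_rank0 y hcond.2, AddEquiv.apply_symm_apply]
          rw [h1]
          exact S.C₀.e_natural y x y le_rfl hcond.1 hcond.2 (a y)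
        · rw [dif_neg hcond, dif_neg hcond]
    · intro x a hafin hacond
      set cC : ∀ y : P, S.C₀.Λ y := fun y => (S.FE y).symm (a y) with hcC
      have hcc : ∀ y, S.ff y (cC y) = a y := fun y => S.gg_ff y (a y)
      have hcfin : {y : P | cC y ≠ 0}.Finite := by
        refine hafin.subset ?_
        intro y hy
        by_contra h0
        refine hy ?_
        show (S.FE y).symm (a y) = 0
        rw [not_not.mp h0]
        exact map_zero _
      have hccond : ∀ y, cC y ≠ 0 → y ≤ x ∧ r y = 0 := by
        intro y hy
        refine hacond y fun h0 => hy ?_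
        show (S.FE y).symm (a y) = 0
        rw [h0]
        exact map_zero _
      have hsums : (∑ᶠ y : P, if h : y ≤ x ∧ r y = 0 then
            (AddMonoidHom.comp (show G.obj y →+ G.obj x from (G.map (homOfLE h.1)).hom)
              (S.e0 y h.2).toAddMonoidHom) (a y) else 0)
          = (∑ᶠ y : P, if h : y ≤ x ∧ r y = 0 then S.C₀.e x y h.1 h.2 (cC y) else 0) := by
        refine finsum_congr fun y => ?_
        by_cases hcond : y ≤ x ∧ r y = 0
        · rw [dif_pos hcond, dif_pos hcond]
          show G.map (homOfLE hcond.1) ((S.e0 y hcond.2) (a y))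
              = S.C₀.e x y hcond.1 hcond.2 (cC y)
          have h1 : (S.e0 y hcond.2) (a y) = S.C₀.e y y le_rfl hcond.2 (cC y) := by
            conv_lhs => rw [← hcc y]
            rw [S.ff_rank0 y hcond.2, AddEquiv.apply_symm_apply]
          rw [h1]
          exact S.C₀.e_natural y x y le_rfl hcond.1 hcond.2 (cC y)
        · rw [dif_neg hcond, dif_neg hcond]
      rw [hsums, S.C₀.e_ker x cC hcfin hccond]
      constructor
      · rintro ⟨b, hbfin, hbcond, hbeq⟩
        refine ⟨fun w => S.ff w (b w), ?_, ?_, ?_⟩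
        · refine hbfin.subset ?_
          intro y hy
          by_contra h0
          refine hy ?_
          show S.ff y (b y) = 0
          rw [not_not.mp h0]
          exact S.ff_zero y
        · intro y hy
          refine hbcond y fun h0 => hy ?_
          show S.ff y (b y) = 0
          rw [h0]
          exact S.ff_zero y
        · intro y
          show a y = ∑ᶠ w : P, S.δ w y (S.ff w (b w))
          rw [← hcc y, hbeq y]
          exact S.chain_finsum b hbfin y
      · rintro ⟨b, hbfin, hbcond, hbeq⟩
        have hbfin' : {w : P | (S.FE w).symm (b w) ≠ 0}.Finite := by
          refine hbfin.subset ?_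
          intro y hy
          by_contra h0
          refine hy ?_
          show (S.FE y).symm (b y) = 0
          rw [not_not.mp h0]
          exact map_zero _
        refine ⟨fun w => (S.FE w).symm (b w), hbfin', ?_, ?_⟩
        · intro y hy
          refine hbcond y fun h0 => hy ?_
          show (S.FE y).symm (b y) = 0
          rw [h0]
          exact map_zero _
        · intro y
          apply S.ff_inj y
          show S.ff y (cC y) = S.ff y (∑ᶠ w : P, S.C₀.δ w y ((S.FE w).symm (b w)))
          rw [hcc y, S.chain_finsum _ hbfin' y]
          refine (hbeq y).trans (finsum_congr fun w => ?_)
          rw [S.gg_ff w (b w)]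

end S10
/-- **Statement 10 (recognition of cellular forms).**  Let `(P, r)` be a graded poset and
`G` a copresheaf on `P` such that `(P,G)` admits a cellular form.  Let `Λ` be a
`P`-graded `ℤ`-module with maps `∂` whose components `δ x y` vanish unless `y ⋖ x`, with
`∂∂ = 0`, and such that:
(1) `Λ_{x₀} = G(x₀)` for rank-`0` elements (via given identifications `e0`);
(2) for rank-`1` elements `x₁`, `Λ_{x₁} = ker(⊕_{y<x₁} G(y) → G(x₁))` with `∂` the
inclusion: the family `(δ x₁ y)_y` is injective, lands in the kernel, and reaches every
element of the kernel;
(3) for `r(x) > 1` the sequence `0 → Λ_x → ⊕_{y⋖x} Λ_y → ⊕_{y<x, r(y)=r(x)-2} Λ_y` is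
exact.
Then `(Λ, ∂)` is a cellular form of `(P, G)`. -/
theorem statement10 (P : Type) [PartialOrder P] (r : P → ℕ) (hr : IsGrading P r)
    (G : P ⥤ AddCommGrpCat.{0}) (C₀ : CellularForm P r G)
    (Λ : P → Type) [inst : ∀ x, AddCommGroup (Λ x)] (δ : ∀ x y : P, Λ x →+ Λ y)
    (hsupp : ∀ x y : P, ¬(y ⋖ x) → δ x y = 0)
    (hfin : ∀ (x : P) (a : Λ x), {y : P | δ x y a ≠ 0}.Finite)
    (hdd : ∀ (x z : P) (a : Λ x), (∑ᶠ y : P, δ y z (δ x y a)) = 0)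
    (e0 : ∀ x : P, r x = 0 → (Λ x ≃+ G.obj x))
    (h2a : ∀ x : P, r x = 1 → ∀ a a' : Λ x, (∀ y, δ x y a = δ x y a') → a = a')
    (h2b : ∀ x : P, r x = 1 → ∀ a : Λ x,
      (∑ᶠ y : P, if h : y < x ∧ r y = 0 then
        G.map (homOfLE h.1.le) (e0 y h.2 (δ x y a)) else 0) = 0)
    (h2c : ∀ x : P, r x = 1 → ∀ g : ∀ y : P, G.obj y, {y : P | g y ≠ 0}.Finite →
      (∀ y, g y ≠ 0 → y < x) →
      (∑ᶠ y : P, if h : y < x then G.map (homOfLE h.le) (g y) else 0) = 0 →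
      ∃ a : Λ x, ∀ (y : P) (_ : y < x) (h0 : r y = 0), e0 y h0 (δ x y a) = g y)
    (h3a : ∀ x : P, 1 < r x → ∀ a a' : Λ x, (∀ y, δ x y a = δ x y a') → a = a')
    (h3b : ∀ x : P, 1 < r x → ∀ a : ∀ y : P, Λ y, {y : P | a y ≠ 0}.Finite →
      (∀ y, a y ≠ 0 → y ⋖ x) → (∀ z, (∑ᶠ y : P, δ y z (a y)) = 0) →
      ∃ b : Λ x, ∀ y, a y = δ x y b) :
    IsCellularForm P r G Λ δ := by
  exact S10.main (S10.mk hr C₀ Λ δ hsupp hfin hdd e0 h2a h2b h2c h3a h3b)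
end

section
/- For any simple graph Γ on [n] and positive integers k, m: the poset L_k^m(Γ) is a join semilattice; the projection π : L_k^m(Γ) → L(Γ) preserves joins; and for any I, J ∈ L(Γ), θ, ν ∈ C_I^m with θ ⋖ ν (θ covered by ν in C_I^m), and ψ ∈ C_J^m, either θ∨ψ ⋖ ν∨ψ or θ∨ψ = ν∨ψ in L_k^m(Γ). -/
open Classical

noncomputable section

/-- A partial coloring matrix over a partition `I` of `[n]` (an element of the fiber
`C_I^m` of `L_k^m`).  The entry of the matrix at a block `p` of `I` with at least two
elements and a column `t ∈ [m]` is either a `ℤ_k`-coloring of `p` (an equivalence class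
of functions `p → ℤ/k` modulo translation) or an undefined symbol `?`.  We encode a
coloring `φ` by its coboundary `d t i j = φ(i) - φ(j)` (which determines it exactly up to
translation), and an undefined entry by `d t i j = none` on its block. -/
structure PColMat (n m k : ℕ) where
  I : Setoid (Fin n)
  d : Fin m → Fin n → Fin n → Option (ZMod k)
  rel_of_def : ∀ t i j, d t i j ≠ none → I i j
  big_of_def : ∀ t i j, d t i j ≠ none → ∃ l, I l i ∧ l ≠ i
  uniform : ∀ t i j i' j', I i j → I i i' → I i j' → d t i j = none → d t i' j' = none
  cocycle : ∀ t i j l (a b : ZMod k), d t i j = some a → d t j l = some b →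
    d t i l = some (a + b)

namespace PColMat

variable {n m k : ℕ}

theorem ext' {a b : PColMat n m k} (h1 : a.I = b.I) (h2 : a.d = b.d) : a = b := by
  cases a; cases b; cases h1; cases h2; rfl

/-- The partial order on partial coloring matrices: `a ≤ b` iff the partition of `a`
refines the partition of `b` and `a` agrees with the restriction `b|_{I(a)}` wherever the
latter is defined, i.e. `a` is obtained from `b|_{I(a)}` by completing some `?` entries. -/
instance : PartialOrder (PColMat n m k) where
  le a b := a.I ≤ b.I ∧
    ∀ t i j (v : ZMod k), a.I i j → b.d t i j = some v → a.d t i j = some v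
  le_refl a := ⟨le_rfl, fun _ _ _ _ _ h => h⟩
  le_trans a b c hab hbc := ⟨hab.1.trans hbc.1,
    fun t i j v hij h => hab.2 t i j v hij (hbc.2 t i j v (hab.1 hij) h)⟩
  le_antisymm a b hab hba := by
    have hI : a.I = b.I := le_antisymm hab.1 hba.1
    refine ext' hI ?_
    funext t i j
    rcases hb : b.d t i j with _ | v
    · rcases ha : a.d t i j with _ | w
      · rfl
      · exfalso
        have hrel : b.I i j := hI ▸ a.rel_of_def t i j (by simp [ha])
        have h2 := hba.2 t i j w hrel ha
        rw [hb] at h2; cases h2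
    · have hrel : a.I i j := by
        have := b.rel_of_def t i j (by simp [hb])
        rw [hI]; exact this
      exact hab.2 t i j v hrel hb

/-- The set of undefined ("?") entries of a partial coloring matrix: pairs `(p, t)` where
`p` is a block of the partition with at least two elements and the entry of the matrix at
`(p, t)` is undefined. -/
def Ud (θ : PColMat n m k) : Set (Set (Fin n) × Fin m) :=
  {pt | pt.1 ∈ θ.I.classes ∧ 2 ≤ Nat.card pt.1 ∧ ∀ i ∈ pt.1, θ.d pt.2 i i = none}

/-- The fiber rank `r_f`: number of undefined entries. -/
def rf (θ : PColMat n m k) : ℕ := Nat.card θ.Ud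

/-- The base rank `r_b`: the rank of the underlying partition in the partition lattice,
i.e. `n` minus the number of blocks. -/
def rb (θ : PColMat n m k) : ℕ := n - Nat.card (Quotient θ.I)

/-- `η` is a completion of `θ`: it lies below `θ` in the same fiber and has no
undefined entries. -/
def IsCompletion (η θ : PColMat n m k) : Prop := η.I = θ.I ∧ η ≤ θ ∧ rf η = 0

end PColMat

/-- The rank of a partition of `[n]`: `n` minus the number of blocks. -/
def prank (n : ℕ) (I : Setoid (Fin n)) : ℕ := n - Nat.card (Quotient I)

/-- The bond lattice of a simple graph `Γ` on `[n]`: partitions all of whose blocks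
induce connected subgraphs of `Γ`. -/
def bondLattice (n : ℕ) (Γ : SimpleGraph (Fin n)) : Set (Setoid (Fin n)) :=
  {I | ∀ p ∈ I.classes, (Γ.induce p).Connected}

/-- `L_k^m(Γ)`: the disjoint union of the fibers `C_I^m` over the partitions `I` in the
bond lattice of `Γ`, with the partial order described above. -/
def LkmG (n m k : ℕ) (Γ : SimpleGraph (Fin n)) : Type :=
  {θ : PColMat n m k // θ.I ∈ bondLattice n Γ}

instance {n m k : ℕ} {Γ : SimpleGraph (Fin n)} : PartialOrder (LkmG n m k Γ) :=
  Subtype.partialOrder _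

namespace LkmG

variable {n m k : ℕ} {Γ : SimpleGraph (Fin n)}

/-- Covering relation inside a fiber `C_I^m` of `L_k^m(Γ)`. -/
def FiberCovBy (ψ θ : LkmG n m k Γ) : Prop :=
  ψ.1.I = θ.1.I ∧ ψ < θ ∧ ∀ z : LkmG n m k Γ, z.1.I = θ.1.I → ψ < z → ¬ z < θ

/-- `η` is a completion of `θ` inside `L_k^m(Γ)`. -/
def IsCompletionL (η θ : LkmG n m k Γ) : Prop :=
  η.1.I = θ.1.I ∧ η ≤ θ ∧ PColMat.rf η.1 = 0

end LkmG
section MyHelpers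

open Classical

namespace PColMat

variable {n m k : ℕ}

lemma diag_eq_zero (a : PColMat n m k) {t : Fin m} {i : Fin n} {v : ZMod k}
    (h : a.d t i i = some v) : v = 0 := by
  have h2 := a.cocycle t i i i v v h h
  rw [h] at h2
  have h3 : v = v + v := by injection h2
  exact (left_eq_add.mp h3)

lemma defined_of_diag (a : PColMat n m k) {t : Fin m} {i j : Fin n} (hij : a.I i j)
    (h : a.d t i i ≠ none) : a.d t i j ≠ none :=
  fun hn => h (a.uniform t i j i i hij (a.I.refl' i) (a.I.refl' i) hn)

lemma diag_of_defined (a : PColMat n m k) {t : Fin m} {i j : Fin n} (hij : a.I i j)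
    (h : a.d t i j ≠ none) : a.d t i i ≠ none :=
  fun hn => h (a.uniform t i i i j (a.I.refl' i) (a.I.refl' i) hij hn)

lemma symm_entry (a : PColMat n m k) {t : Fin m} {i j : Fin n} {v : ZMod k}
    (h : a.d t i j = some v) : a.d t j i = some (-v) := by
  have hij : a.I i j := a.rel_of_def t i j (by simp [h])
  have hji : a.d t j i ≠ none := by
    intro hn
    have := a.uniform t j i i j (a.I.symm' hij) (a.I.symm' hij) (a.I.refl' j) hn
    rw [h] at this; cases this
  obtain ⟨w, hw⟩ := Option.ne_none_iff_exists'.mp hji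
  have h2 := a.cocycle t i j i v w h hw
  have h3 := diag_eq_zero a h2
  rw [hw]
  congr 1
  linear_combination h3
  
def Edge (a b : PColMat n m k) (t : Fin m) (i j : Fin n) (v : ZMod k) : Prop :=
  a.d t i j = some v ∨ b.d t i j = some v

inductive Chain (a b : PColMat n m k) (t : Fin m) : Fin n → Fin n → ZMod k → Prop
  | refl (i : Fin n) : Chain a b t i i 0
  | tail {i j l : Fin n} {v w : ZMod k} : Chain a b t i j v → Edge a b t j l w →
      Chain a b t i l (v + w)

lemma rel_left {a b : PColMat n m k} {i j : Fin n} (h : a.I i j) : (a.I ⊔ b.I) i j :=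
  Setoid.le_def.mp le_sup_left h

lemma rel_right {a b : PColMat n m k} {i j : Fin n} (h : b.I i j) : (a.I ⊔ b.I) i j :=
  Setoid.le_def.mp le_sup_right h

lemma edge_rel {a b : PColMat n m k} {t i j v} (h : Edge a b t i j v) : (a.I ⊔ b.I) i j := by
  rcases h with h | h
  · exact rel_left (a.rel_of_def t i j (by simp [h]))
  · exact rel_right (b.rel_of_def t i j (by simp [h]))

lemma chain_rel {a b : PColMat n m k} {t i j v} (h : Chain a b t i j v) :
    (a.I ⊔ b.I) i j := by
  induction h with
  | refl => exact (a.I ⊔ b.I).refl' _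
  | tail _ he ih => exact (a.I ⊔ b.I).trans' ih (edge_rel he)

lemma chain_single {a b : PColMat n m k} {t i j v} (h : Edge a b t i j v) :
    Chain a b t i j v := by
  have := Chain.tail (Chain.refl (a := a) (b := b) (t := t) i) h
  rwa [zero_add] at this

lemma chain_trans {a b : PColMat n m k} {t i j l v w} (h1 : Chain a b t i j v)
    (h2 : Chain a b t j l w) : Chain a b t i l (v + w) := by
  induction h2 with
  | refl => rwa [add_zero]
  | tail hc he ih =>
    have := Chain.tail ih he
    rwa [add_assoc] at this

lemma edge_symm {a b : PColMat n m k} {t i j v} (h : Edge a b t i j v) :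
    Edge a b t j i (-v) := by
  rcases h with h | h
  · exact Or.inl (symm_entry a h)
  · exact Or.inr (symm_entry b h)

lemma chain_symm {a b : PColMat n m k} {t i j v} (h : Chain a b t i j v) :
    Chain a b t j i (-v) := by
  induction h with
  | refl => rw [neg_zero]; exact Chain.refl _
  | tail hc he ih =>
    have := chain_trans (chain_single (edge_symm he)) ih
    rw [add_comm, neg_add]
    exact this

/-- The condition for an entry of the join to be defined on the block of `i` in column
`t`: every point of the block lies in a defined (hence multi-element) block of both `a`
and `b`, and the chain sums are consistent. -/
def Cond (a b : PColMat n m k) (t : Fin m) (i : Fin n) : Prop :=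
  (∀ j, (a.I ⊔ b.I) i j → a.d t j j ≠ none ∧ b.d t j j ≠ none) ∧
  ∀ x y (v w : ZMod k), (a.I ⊔ b.I) i x → Chain a b t x y v → Chain a b t x y w → v = w

lemma cond_congr {a b : PColMat n m k} {t i i'} (h : (a.I ⊔ b.I) i i')
    (hc : Cond a b t i) : Cond a b t i' :=
  ⟨fun j hj => hc.1 j ((a.I ⊔ b.I).trans' h hj),
   fun x y v w hx => hc.2 x y v w ((a.I ⊔ b.I).trans' h hx)⟩

lemma chain_exists {a b : PColMat n m k} {t : Fin m} {i : Fin n} (hc : Cond a b t i) :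
    ∀ {j}, (a.I ⊔ b.I) i j → ∃ v, Chain a b t i j v := by
  have main : ∀ x y, Relation.EqvGen (fun p q => a.I p q ∨ b.I p q) x y →
      ((a.I ⊔ b.I) i x → ∃ v, Chain a b t x y v) := by
    intro x y h
    induction h with
    | rel x y hR =>
      intro hx
      rcases hR with hR | hR
      · have hd : a.d t x y ≠ none := defined_of_diag a hR (hc.1 x hx).1
        obtain ⟨v, hv⟩ := Option.ne_none_iff_exists'.mp hd
        exact ⟨v, chain_single (Or.inl hv)⟩
      · have hd : b.d t x y ≠ none := defined_of_diag b hR (hc.1 x hx).2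
        obtain ⟨v, hv⟩ := Option.ne_none_iff_exists'.mp hd
        exact ⟨v, chain_single (Or.inr hv)⟩
    | refl x => exact fun _ => ⟨0, Chain.refl x⟩
    | symm x y hxy ih =>
      intro hy
      have hxyK : (a.I ⊔ b.I) x y := by rw [Setoid.sup_eq_eqvGen]; exact hxy
      obtain ⟨v, hv⟩ := ih ((a.I ⊔ b.I).trans' hy ((a.I ⊔ b.I).symm' hxyK))
      exact ⟨-v, chain_symm hv⟩
    | trans x y z hxy hyz ih1 ih2 =>
      intro hx
      have hxyK : (a.I ⊔ b.I) x y := by rw [Setoid.sup_eq_eqvGen]; exact hxy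
      obtain ⟨v, hv⟩ := ih1 hx
      obtain ⟨w, hw⟩ := ih2 ((a.I ⊔ b.I).trans' hx hxyK)
      exact ⟨v + w, chain_trans hv hw⟩
  intro j hj
  have hj' : Relation.EqvGen (fun p q => a.I p q ∨ b.I p q) i j := by
    rw [Setoid.sup_eq_eqvGen] at hj; exact hj
  exact main i j hj' ((a.I ⊔ b.I).refl' i)

def joinD (a b : PColMat n m k) (t : Fin m) (i j : Fin n) : Option (ZMod k) :=
  if h : (a.I ⊔ b.I) i j ∧ Cond a b t i then
    some (Classical.choose (chain_exists h.2 h.1)) else none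

lemma joinD_some_iff {a b : PColMat n m k} {t i j v} :
    joinD a b t i j = some v ↔
      (a.I ⊔ b.I) i j ∧ Cond a b t i ∧ Chain a b t i j v := by
  unfold joinD
  split
  next h =>
    constructor
    · intro he
      have hv : Classical.choose (chain_exists h.2 h.1) = v := by injection he
      exact ⟨h.1, h.2, hv ▸ Classical.choose_spec (chain_exists h.2 h.1)⟩
    · rintro ⟨hK, hc, hch⟩
      have := hc.2 i j _ v ((a.I ⊔ b.I).refl' i)
        (Classical.choose_spec (chain_exists h.2 h.1)) hch
      rw [this]
  next h =>
    constructor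
    · intro he; cases he
    · rintro ⟨hK, hc, hch⟩; exact absurd ⟨hK, hc⟩ h

lemma joinD_none_iff {a b : PColMat n m k} {t i j} :
    joinD a b t i j = none ↔ ¬((a.I ⊔ b.I) i j ∧ Cond a b t i) := by
  unfold joinD
  split
  next h => simp [h]
  next h => simp [h]

def joinP (a b : PColMat n m k) : PColMat n m k where
  I := a.I ⊔ b.I
  d := joinD a b
  rel_of_def := by
    intro t i j h
    rw [Ne, joinD_none_iff, not_not] at h
    exact h.1
  big_of_def := by
    intro t i j h
    rw [Ne, joinD_none_iff, not_not] at h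
    have hd : a.d t i i ≠ none := (h.2.1 i ((a.I ⊔ b.I).refl' i)).1
    obtain ⟨l, hl, hne⟩ := a.big_of_def t i i hd
    exact ⟨l, rel_left hl, hne⟩
  uniform := by
    intro t i j i' j' hij hii' hij' h
    rw [joinD_none_iff] at h ⊢
    rintro ⟨hK, hc⟩
    exact h ⟨hij, cond_congr ((a.I ⊔ b.I).symm' hii') hc⟩
  cocycle := by
    intro t i j l v w h1 h2
    rw [joinD_some_iff] at h1 h2 ⊢
    exact ⟨(a.I ⊔ b.I).trans' h1.1 h2.1, h1.2.1, chain_trans h1.2.2 h2.2.2⟩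

lemma le_joinP_left (a b : PColMat n m k) : a ≤ joinP a b := by
  refine ⟨le_sup_left, ?_⟩
  intro t i j v hij h
  obtain ⟨hK, hc, hch⟩ := joinD_some_iff.mp h
  have hd : a.d t i j ≠ none := defined_of_diag a hij (hc.1 i ((a.I ⊔ b.I).refl' i)).1
  obtain ⟨w, hw⟩ := Option.ne_none_iff_exists'.mp hd
  have : v = w := hc.2 i j v w ((a.I ⊔ b.I).refl' i) hch (chain_single (Or.inl hw))
  rw [this]; exact hw

lemma le_joinP_right (a b : PColMat n m k) : b ≤ joinP a b := by
  refine ⟨le_sup_right, ?_⟩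
  intro t i j v hij h
  obtain ⟨hK, hc, hch⟩ := joinD_some_iff.mp h
  have hd : b.d t i j ≠ none := defined_of_diag b hij (hc.1 i ((a.I ⊔ b.I).refl' i)).2
  obtain ⟨w, hw⟩ := Option.ne_none_iff_exists'.mp hd
  have : v = w := hc.2 i j v w ((a.I ⊔ b.I).refl' i) hch (chain_single (Or.inr hw))
  rw [this]; exact hw

lemma joinP_le {a b c : PColMat n m k} (ha : a ≤ c) (hb : b ≤ c) : joinP a b ≤ c := by
  have hKc : a.I ⊔ b.I ≤ c.I := sup_le ha.1 hb.1
  refine ⟨hKc, ?_⟩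
  intro t i j v hK hcd
  have hcI : c.I i j := Setoid.le_def.mp hKc hK
  have hcd' : c.d t i j ≠ none := by simp [hcd]
  have hblock : ∀ x y, c.I i x → c.I i y → c.d t x y ≠ none := by
    intro x y hx hy hn
    exact hcd' (c.uniform t x y i j (c.I.trans' (c.I.symm' hx) hy) (c.I.symm' hx)
      (c.I.trans' (c.I.symm' hx) hcI) hn)
  have forced : ∀ x y (v' : ZMod k), Chain a b t x y v' → c.I i x → c.d t x y = some v' := by
    intro x y v' hch
    induction hch with
    | refl =>
      intro hx
      obtain ⟨u, hu⟩ := Option.ne_none_iff_exists'.mp (hblock _ _ hx hx)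
      rwa [diag_eq_zero c hu] at hu
    | tail hc1 he ih =>
      intro hx
      have h1 := ih hx
      have hy := c.I.trans' hx (Setoid.le_def.mp hKc (chain_rel hc1))
      have hl := c.I.trans' hy (Setoid.le_def.mp hKc (edge_rel he))
      obtain ⟨w', hw'⟩ := Option.ne_none_iff_exists'.mp (hblock _ _ hy hl)
      rcases he with he | he
      · have h2 := ha.2 t _ _ w' (a.rel_of_def t _ _ (by simp [he])) hw'
        rw [he] at h2
        rw [← Option.some.inj h2] at hw'
        exact c.cocycle t _ _ _ _ _ h1 hw'
      · have h2 := hb.2 t _ _ w' (b.rel_of_def t _ _ (by simp [he])) hw'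
        rw [he] at h2
        rw [← Option.some.inj h2] at hw'
        exact c.cocycle t _ _ _ _ _ h1 hw'
  have hcond : Cond a b t i := by
    constructor
    · intro j' hj'
      have hcj : c.I i j' := Setoid.le_def.mp hKc hj'
      obtain ⟨u, hu⟩ := Option.ne_none_iff_exists'.mp (hblock j' j' hcj hcj)
      refine ⟨?_, ?_⟩
      · have := ha.2 t j' j' u (a.I.refl' j') hu; simp [this]
      · have := hb.2 t j' j' u (b.I.refl' j') hu; simp [this]
    · intro x y v1 v2 hx h1 h2
      have e1 := forced x y v1 h1 (Setoid.le_def.mp hKc hx)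
      have e2 := forced x y v2 h2 (Setoid.le_def.mp hKc hx)
      rw [e1] at e2; injection e2
  obtain ⟨v', hch⟩ := chain_exists hcond hK
  have hvv := forced i j v' hch (c.I.refl' i)
  rw [hcd] at hvv
  have hv : v = v' := by injection hvv
  show joinD a b t i j = some v
  rw [joinD_some_iff]
  exact ⟨hK, hcond, hv ▸ hch⟩

end PColMat

end MyHelpers
section GraphPart

open Classical

variable {n m k : ℕ} {Γ : SimpleGraph (Fin n)}

lemma reachable_induce_mono {V : Type*} {Γ : SimpleGraph V} {s t : Set V} (hst : s ⊆ t)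
    {x y : V} (hx : x ∈ s) (hy : y ∈ s) (h : (Γ.induce s).Reachable ⟨x, hx⟩ ⟨y, hy⟩) :
    (Γ.induce t).Reachable ⟨x, hst hx⟩ ⟨y, hst hy⟩ := by
  have := h.map (Γ.induceHomOfLE hst).toHom
  exact this

lemma sup_mem_bondLattice {I J : Setoid (Fin n)} (hI : I ∈ bondLattice n Γ)
    (hJ : J ∈ bondLattice n Γ) : I ⊔ J ∈ bondLattice n Γ := by
  rintro p ⟨y₀, rfl⟩
  rw [SimpleGraph.connected_iff]
  constructor
  · rintro ⟨u, hu⟩ ⟨v, hv⟩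
    -- hu : (I ⊔ J) u y₀, hv : (I ⊔ J) v y₀
    have key : ∀ x y, Relation.EqvGen (fun a b => I a b ∨ J a b) x y →
        ∀ (hx : (I ⊔ J) x y₀) (hy : (I ⊔ J) y y₀),
        (Γ.induce {z | (I ⊔ J) z y₀}).Reachable ⟨x, hx⟩ ⟨y, hy⟩ := by
      intro x y h
      induction h with
      | rel x y hR =>
        intro hx hy
        rcases hR with hR | hR
        · have hc : {z | I z y} ∈ I.classes := I.mem_classes y
          have hconn := hI _ hc
          have hsub : {z | I z y} ⊆ {z | (I ⊔ J) z y₀} := by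
            intro z hz
            exact (I ⊔ J).trans' (Setoid.le_def.mp le_sup_left hz) hy
          have hr := hconn.preconnected ⟨x, hR⟩ ⟨y, I.refl' y⟩
          exact reachable_induce_mono hsub hR (I.refl' y) hr
        · have hc : {z | J z y} ∈ J.classes := J.mem_classes y
          have hconn := hJ _ hc
          have hsub : {z | J z y} ⊆ {z | (I ⊔ J) z y₀} := by
            intro z hz
            exact (I ⊔ J).trans' (Setoid.le_def.mp le_sup_right hz) hy
          have hr := hconn.preconnected ⟨x, hR⟩ ⟨y, J.refl' y⟩
          exact reachable_induce_mono hsub hR (J.refl' y) hr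
      | refl x => intro hx hy; rfl
      | symm x y hxy ih => intro hx hy; exact (ih hy hx).symm
      | trans x y z hxy hyz ih1 ih2 =>
        intro hx hz
        have hxyK : (I ⊔ J) x y := by rw [Setoid.sup_eq_eqvGen]; exact hxy
        have hy : (I ⊔ J) y y₀ := (I ⊔ J).trans' ((I ⊔ J).symm' hxyK) hx
        exact (ih1 hx hy).trans (ih2 hy hz)
    have huv : Relation.EqvGen (fun a b => I a b ∨ J a b) u v := by
      have : (I ⊔ J) u v := (I ⊔ J).trans' hu ((I ⊔ J).symm' hv)
      rw [Setoid.sup_eq_eqvGen] at this; exact this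
    exact key u v huv hu hv
  · exact ⟨⟨y₀, (I ⊔ J).refl' y₀⟩⟩

end GraphPart

namespace LkmG

open PColMat

variable {n m k : ℕ} {Γ : SimpleGraph (Fin n)}

/-- The join of two elements of `L_k^m(Γ)`. -/
def mkJoin (a b : LkmG n m k Γ) : LkmG n m k Γ :=
  ⟨joinP a.1 b.1, sup_mem_bondLattice a.2 b.2⟩

lemma le_iff {a b : LkmG n m k Γ} : a ≤ b ↔ a.1 ≤ b.1 := Iff.rfl

lemma mkJoin_isLUB (a b : LkmG n m k Γ) : IsLUB {a, b} (mkJoin a b) := by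
  constructor
  · intro x hx
    simp only [Set.mem_insert_iff, Set.mem_singleton_iff] at hx
    rcases hx with rfl | rfl
    · exact le_joinP_left _ _
    · exact le_joinP_right _ _
  · intro c hc
    have ha : a ≤ c := hc (Set.mem_insert _ _)
    have hb : b ≤ c := hc (Set.mem_insert_of_mem _ rfl)
    exact joinP_le ha hb

end LkmG
namespace PColMat

open scoped Classical

variable {n m k : ℕ}

/-- Patch matrix: agrees with `A` on the block of `i₀` in column `t₀`, with `B`
elsewhere. -/
def patchD (A B : PColMat n m k) (t₀ : Fin m) (i₀ : Fin n) (t : Fin m) (i j : Fin n) :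
    Option (ZMod k) :=
  if t = t₀ ∧ A.I i i₀ ∧ A.I j i₀ then A.d t i j else B.d t i j

variable {A B P : PColMat n m k} {t₀ : Fin m} {i₀ : Fin n}

lemma patchD_rel (hI : A.I = B.I) {t i j v} (h : patchD A B t₀ i₀ t i j = some v) :
    A.I i j := by
  unfold patchD at h
  split at h
  · exact A.rel_of_def t i j (by simp [h])
  · rw [hI]; exact B.rel_of_def t i j (by simp [h])

def patchP (A B : PColMat n m k) (t₀ : Fin m) (i₀ : Fin n) (hI : A.I = B.I) :
    PColMat n m k where
  I := B.I
  d := patchD A B t₀ i₀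
  rel_of_def := by
    intro t i j h
    obtain ⟨v, hv⟩ := Option.ne_none_iff_exists'.mp h
    rw [← hI]; exact patchD_rel hI hv
  big_of_def := by
    intro t i j h
    unfold patchD at h
    split at h
    · obtain ⟨l, hl, hne⟩ := A.big_of_def t i j h
      exact ⟨l, hI ▸ hl, hne⟩
    · exact B.big_of_def t i j h
  uniform := by
    intro t i j i' j' hij hii' hij' h
    have hAij : A.I i j := hI ▸ hij
    have hAii' : A.I i i' := hI ▸ hii'
    have hAij' : A.I i j' := hI ▸ hij'
    unfold patchD at h ⊢
    by_cases hc : t = t₀ ∧ A.I i i₀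
    · have c1 : t = t₀ ∧ A.I i i₀ ∧ A.I j i₀ :=
        ⟨hc.1, hc.2, A.I.trans' (A.I.symm' hAij) hc.2⟩
      have c2 : t = t₀ ∧ A.I i' i₀ ∧ A.I j' i₀ :=
        ⟨hc.1, A.I.trans' (A.I.symm' hAii') hc.2, A.I.trans' (A.I.symm' hAij') hc.2⟩
      rw [if_pos c1] at h
      rw [if_pos c2]
      exact A.uniform t i j i' j' hAij hAii' hAij' h
    · rw [if_neg (fun hx => hc ⟨hx.1, hx.2.1⟩)] at h
      rw [if_neg (fun hx => hc ⟨hx.1, A.I.trans' hAii' hx.2.1⟩)]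
      exact B.uniform t i j i' j' hij hii' hij' h
  cocycle := by
    intro t i j l v w h1 h2
    have hij := patchD_rel hI h1
    have hjl := patchD_rel hI h2
    unfold patchD at h1 h2 ⊢
    by_cases hc : t = t₀ ∧ A.I i i₀
    · have hj0 : A.I j i₀ := A.I.trans' (A.I.symm' hij) hc.2
      have hl0 : A.I l i₀ := A.I.trans' (A.I.symm' hjl) hj0
      rw [if_pos ⟨hc.1, hc.2, hj0⟩] at h1
      rw [if_pos ⟨hc.1, hj0, hl0⟩] at h2
      rw [if_pos ⟨hc.1, hc.2, hl0⟩]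
      exact A.cocycle t i j l v w h1 h2
    · rw [if_neg (fun hx => hc ⟨hx.1, hx.2.1⟩)] at h1
      rw [if_neg (fun hx => hc ⟨hx.1, A.I.trans' hij hx.2.1⟩)] at h2
      rw [if_neg (fun hx => hc ⟨hx.1, hx.2.1⟩)]
      exact B.cocycle t i j l v w h1 h2

section Transfer

variable (hI : A.I = B.I) (hle : A ≤ B)
variable (huniq : ∀ t i, B.d t i i = none → A.d t i i ≠ none → t = t₀ ∧ A.I i i₀)

include hI hle huniq in
lemma agree_off : ∀ t i j, ¬(t = t₀ ∧ A.I i i₀ ∧ A.I j i₀) → A.d t i j = B.d t i j := by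
  intro t i j hcnd
  rcases hb : B.d t i j with _ | v
  · by_cases hrel : A.I i j
    · rcases ha : A.d t i j with _ | w
      · rfl
      · exfalso
        have hBd : B.d t i i = none :=
          B.uniform t i j i i (hI ▸ hrel) (B.I.refl' i) (B.I.refl' i) hb
        have hAd : A.d t i i ≠ none := diag_of_defined A hrel (by simp [ha])
        obtain ⟨ht, hi0⟩ := huniq t i hBd hAd
        exact hcnd ⟨ht, hi0, A.I.trans' (A.I.symm' hrel) hi0⟩
    · rcases ha : A.d t i j with _ | w
      · rfl
      · exact absurd (A.rel_of_def t i j (by simp [ha])) hrel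
  · exact hle.2 t i j v (hI ▸ B.rel_of_def t i j (by simp [hb])) hb

include hI hle in
lemma edge_mono' {t i j v} (h : Edge B P t i j v) : Edge A P t i j v := by
  rcases h with h | h
  · exact Or.inl (hle.2 t i j v (hI ▸ B.rel_of_def t i j (by simp [h])) h)
  · exact Or.inr h

include hI hle in
lemma chain_mono' {t i j v} (h : Chain B P t i j v) : Chain A P t i j v := by
  induction h with
  | refl => exact Chain.refl _
  | tail _ he ih => exact Chain.tail ih (edge_mono' hI hle he)

include hI hle huniq in
lemma chain_back' {t : Fin m} {x y : Fin n} {v : ZMod k} (h : Chain A P t x y v)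
    (hside : t ≠ t₀ ∨ ¬(A.I ⊔ P.I) x i₀) : Chain B P t x y v := by
  induction h with
  | refl => exact Chain.refl _
  | tail hc he ih =>
    rename_i y l vv w
    refine Chain.tail ih ?_
    rcases he with he | he
    · refine Or.inl ?_
      have hcnd : ¬(t = t₀ ∧ A.I y i₀ ∧ A.I l i₀) := by
        rintro ⟨rfl, hy0, _⟩
        rcases hside with hside | hside
        · exact hside rfl
        · exact hside ((A.I ⊔ P.I).trans' (chain_rel hc) (rel_left hy0))
      rw [← agree_off hI hle huniq _ _ _ hcnd]
      exact he
    · exact Or.inr he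

include hI hle huniq in
lemma cond_iff' {t : Fin m} {i : Fin n} (hside : t ≠ t₀ ∨ ¬(A.I ⊔ P.I) i i₀) :
    Cond A P t i ↔ Cond B P t i := by
  have hKB : B.I ⊔ P.I = A.I ⊔ P.I := by rw [hI]
  constructor
  · intro hA
    constructor
    · intro j hj
      have hj' : (A.I ⊔ P.I) i j := hKB ▸ hj
      have hcnd : ¬(t = t₀ ∧ A.I j i₀ ∧ A.I j i₀) := by
        rintro ⟨rfl, hj0, _⟩
        rcases hside with hside | hside
        · exact hside rfl
        · exact hside ((A.I ⊔ P.I).trans' hj' (rel_left hj0))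
      refine ⟨?_, (hA.1 j hj').2⟩
      rw [← agree_off hI hle huniq _ _ _ hcnd]
      exact (hA.1 j hj').1
    · intro x y v w hx h1 h2
      exact hA.2 x y v w (hKB ▸ hx) (chain_mono' hI hle h1) (chain_mono' hI hle h2)
  · intro hB
    constructor
    · intro j hj
      have hj' : (B.I ⊔ P.I) i j := hKB.symm ▸ hj
      obtain ⟨u, hu⟩ := Option.ne_none_iff_exists'.mp (hB.1 j hj').1
      exact ⟨by simp [hle.2 t j j u (A.I.refl' j) hu], (hB.1 j hj').2⟩
    · intro x y v w hx h1 h2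
      have hside' : t ≠ t₀ ∨ ¬(A.I ⊔ P.I) x i₀ := by
        rcases hside with hside | hside
        · exact Or.inl hside
        · exact Or.inr fun hx0 => hside ((A.I ⊔ P.I).trans' hx hx0)
      exact hB.2 x y v w (hKB.symm ▸ hx) (chain_back' hI hle huniq h1 hside')
        (chain_back' hI hle huniq h2 hside')

include hI hle huniq in
lemma joinD_agree' {t : Fin m} {i j : Fin n} (hside : t ≠ t₀ ∨ ¬(A.I ⊔ P.I) i i₀) :
    joinD A P t i j = joinD B P t i j := by
  have hKB : B.I ⊔ P.I = A.I ⊔ P.I := by rw [hI]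
  rcases hb : joinD B P t i j with _ | v
  · rw [joinD_none_iff] at hb ⊢
    rintro ⟨hK, hcA⟩
    exact hb ⟨hKB.symm ▸ hK, (cond_iff' hI hle huniq hside).mp hcA⟩
  · rw [joinD_some_iff] at hb ⊢
    exact ⟨hKB ▸ hb.1, (cond_iff' hI hle huniq hside).mpr hb.2.1,
      chain_mono' hI hle hb.2.2⟩

include hI in
lemma joinD_B_none (hB0 : B.d t₀ i₀ i₀ = none) {i j : Fin n}
    (hi : (A.I ⊔ P.I) i i₀) : joinD B P t₀ i j = none := by
  have hKB : B.I ⊔ P.I = A.I ⊔ P.I := by rw [hI]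
  rw [joinD_none_iff]
  rintro ⟨hK, hcB⟩
  exact (hcB.1 i₀ (hKB.symm ▸ hi)).1 hB0

end Transfer

end PColMat
namespace LkmG

open PColMat

variable {n m k : ℕ} {Γ : SimpleGraph (Fin n)}

lemma le_parts {a b : LkmG n m k Γ} (h : a ≤ b) :
    a.1.I ≤ b.1.I ∧ ∀ t i j (v : ZMod k), a.1.I i j → b.1.d t i j = some v →
      a.1.d t i j = some v := h

lemma fiber_cover_step {θ ν ψ : LkmG n m k Γ} (hcov : FiberCovBy θ ν) :
    mkJoin θ ψ ⋖ mkJoin ν ψ ∨ mkJoin θ ψ = mkJoin ν ψ := by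
  obtain ⟨hI, hlt, hmin⟩ := hcov
  have hle : θ.1 ≤ ν.1 := hlt.le
  -- Step A : there is a filled diagonal entry
  have hex : ∃ t₀ i₀, ν.1.d t₀ i₀ i₀ = none ∧ θ.1.d t₀ i₀ i₀ ≠ none := by
    by_contra hcon
    push_neg at hcon
    apply hlt.ne
    apply Subtype.ext
    apply PColMat.ext' hI
    funext t i j
    rcases hb : ν.1.d t i j with _ | v
    · by_cases hrel : θ.1.I i j
      · have h1 : ν.1.d t i i = none :=
          ν.1.uniform t i j i i (hI ▸ hrel) (ν.1.I.refl' i) (ν.1.I.refl' i) hb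
        have h2 : θ.1.d t i i = none := hcon t i h1
        exact θ.1.uniform t i i i j (θ.1.I.refl' i) (θ.1.I.refl' i) hrel h2
      · rcases ha : θ.1.d t i j with _ | w
        · rfl
        · exact absurd (θ.1.rel_of_def t i j (by simp [ha])) hrel
    · exact hle.2 t i j v (hI ▸ ν.1.rel_of_def t i j (by simp [hb])) hb
  obtain ⟨t₀, i₀, hB0, hA0⟩ := hex
  -- Step B : uniqueness of the filled entry
  have huniq : ∀ t i, ν.1.d t i i = none → θ.1.d t i i ≠ none →
      t = t₀ ∧ θ.1.I i i₀ := by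
    by_contra hcon
    push_neg at hcon
    obtain ⟨t₁, i₁, hb1, ha1, hcnd⟩ := hcon
    set z : LkmG n m k Γ := ⟨patchP θ.1 ν.1 t₀ i₀ hI, ν.2⟩ with hz
    have hθz : θ < z := by
      rw [lt_iff_le_and_ne]
      constructor
      · refine (⟨le_of_eq hI, ?_⟩ : θ.1 ≤ z.1)
        intro t i j v hij h
        have h' : patchD θ.1 ν.1 t₀ i₀ t i j = some v := h
        unfold patchD at h'
        split at h'
        · exact h'
        · exact hle.2 t i j v hij h'
      · intro heq
        apply ha1
        have hdd := congrArg (fun w : LkmG n m k Γ => w.1.d t₁ i₁ i₁) heq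
        simp only [hz] at hdd
        have : patchD θ.1 ν.1 t₀ i₀ t₁ i₁ i₁ = ν.1.d t₁ i₁ i₁ := by
          unfold patchD
          exact if_neg (fun hx => hcnd hx.1 hx.2.1)
        rw [show (⟨patchP θ.1 ν.1 t₀ i₀ hI, ν.2⟩ : LkmG n m k Γ).1.d t₁ i₁ i₁ =
          patchD θ.1 ν.1 t₀ i₀ t₁ i₁ i₁ from rfl, this, hb1] at hdd
        exact hdd
    have hzν : z < ν := by
      rw [lt_iff_le_and_ne]
      constructor
      · refine (⟨le_rfl, ?_⟩ : z.1 ≤ ν.1)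
        intro t i j v hij h
        show patchD θ.1 ν.1 t₀ i₀ t i j = some v
        unfold patchD
        split
        · exact hle.2 t i j v (hI ▸ hij) h
        · exact h
      · intro heq
        have hdd := congrArg (fun w : LkmG n m k Γ => w.1.d t₀ i₀ i₀) heq
        simp only [hz] at hdd
        apply hA0
        have : patchD θ.1 ν.1 t₀ i₀ t₀ i₀ i₀ = θ.1.d t₀ i₀ i₀ := by
          unfold patchD
          exact if_pos ⟨rfl, θ.1.I.refl' i₀, θ.1.I.refl' i₀⟩
        rw [show (⟨patchP θ.1 ν.1 t₀ i₀ hI, ν.2⟩ : LkmG n m k Γ).1.d t₀ i₀ i₀ =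
          patchD θ.1 ν.1 t₀ i₀ t₀ i₀ i₀ from rfl, this, hB0] at hdd
        exact hdd
    exact hmin z rfl hθz hzν
  -- the main case analysis
  have hKB : ν.1.I ⊔ ψ.1.I = θ.1.I ⊔ ψ.1.I := by rw [hI]
  by_cases hdef : ∀ i j, (θ.1.I ⊔ ψ.1.I) i i₀ → joinD θ.1 ψ.1 t₀ i j = none
  · right
    apply Subtype.ext
    apply PColMat.ext' (show (mkJoin θ ψ).1.I = (mkJoin ν ψ).1.I from hKB.symm)
    funext t i j
    show joinD θ.1 ψ.1 t i j = joinD ν.1 ψ.1 t i j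
    by_cases hexc : t = t₀ ∧ (θ.1.I ⊔ ψ.1.I) i i₀
    · obtain ⟨rfl, hi⟩ := hexc
      rw [hdef i j hi, joinD_B_none hI hB0 hi]
    · have hside : t ≠ t₀ ∨ ¬(θ.1.I ⊔ ψ.1.I) i i₀ := by tauto
      exact joinD_agree' hI hle huniq hside
  · left
    push_neg at hdef
    obtain ⟨i₁, j₁, hi₁, hne₁⟩ := hdef
    obtain ⟨u₁, hu₁⟩ := Option.ne_none_iff_exists'.mp hne₁
    have hKij₁ : (θ.1.I ⊔ ψ.1.I) i₁ j₁ := (joinD_some_iff.mp hu₁).1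
    have hlt2 : mkJoin θ ψ < mkJoin ν ψ := by
      rw [lt_iff_le_and_ne]
      constructor
      · exact (joinP_le (le_trans hle (le_joinP_left ν.1 ψ.1))
          (le_joinP_right ν.1 ψ.1) : (mkJoin θ ψ).1 ≤ (mkJoin ν ψ).1)
      · intro heq
        have hdd := congrArg (fun w : LkmG n m k Γ => w.1.d t₀ i₁ j₁) heq
        rw [show (mkJoin θ ψ).1.d t₀ i₁ j₁ = joinD θ.1 ψ.1 t₀ i₁ j₁ from rfl,
          show (mkJoin ν ψ).1.d t₀ i₁ j₁ = joinD ν.1 ψ.1 t₀ i₁ j₁ from rfl,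
          hu₁, joinD_B_none hI hB0 hi₁] at hdd
        cases hdd
    refine ⟨hlt2, ?_⟩
    intro z hz1 hz2
    have hIz : z.1.I = θ.1.I ⊔ ψ.1.I :=
      le_antisymm (hKB ▸ (le_parts hz2.le).1) (le_parts hz1.le).1
    have hcast : ∀ {x y : Fin n}, (θ.1.I ⊔ ψ.1.I) x y → z.1.I x y := by
      intro x y h; rw [hIz]; exact h
    by_cases hzdef : z.1.d t₀ i₁ j₁ = none
    · -- then z = mkJoin ν ψ, contradiction
      apply hz2.ne
      apply Subtype.ext
      apply PColMat.ext' (hIz.trans hKB.symm)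
      funext t i j
      show z.1.d t i j = joinD ν.1 ψ.1 t i j
      by_cases hKij : (θ.1.I ⊔ ψ.1.I) i j
      · by_cases hexc : t = t₀ ∧ (θ.1.I ⊔ ψ.1.I) i i₀
        · obtain ⟨rfl, hi⟩ := hexc
          rw [joinD_B_none hI hB0 hi]
          have hii₁ : (θ.1.I ⊔ ψ.1.I) i₁ i :=
            (θ.1.I ⊔ ψ.1.I).trans' hi₁ ((θ.1.I ⊔ ψ.1.I).symm' hi)
          have hij₁ : (θ.1.I ⊔ ψ.1.I) i₁ j := (θ.1.I ⊔ ψ.1.I).trans' hii₁ hKij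
          exact z.1.uniform t i₁ j₁ i j (hcast hKij₁) (hcast hii₁) (hcast hij₁) hzdef
        · have hside : t ≠ t₀ ∨ ¬(θ.1.I ⊔ ψ.1.I) i i₀ := by tauto
          have hag := joinD_agree' (P := ψ.1) (j := j) hI hle huniq hside
          rcases hb : joinD ν.1 ψ.1 t i j with _ | v
          · rcases hzv : z.1.d t i j with _ | w
            · rfl
            · exfalso
              have := (le_parts hz1.le).2 t i j w
                (show (mkJoin θ ψ).1.I i j from hKij) hzv
              rw [show ((θ.mkJoin ψ : LkmG n m k Γ) : {θ : PColMat n m k // θ.I ∈ bondLattice n Γ}).1.d t i j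
                = joinD θ.1 ψ.1 t i j from rfl, hag, hb] at this
              cases this
          · exact (le_parts hz2.le).2 t i j v (hcast hKij) hb
      · rcases hzv : z.1.d t i j with _ | w
        · symm
          rw [joinD_none_iff]
          rintro ⟨hK', -⟩
          exact hKij (hKB ▸ hK')
        · exact absurd (hIz ▸ z.1.rel_of_def t i j (by simp [hzv])) hKij
    · -- then z = mkJoin θ ψ, contradiction
      apply hz1.ne'
      apply Subtype.ext
      apply PColMat.ext' hIz
      funext t i j
      show z.1.d t i j = joinD θ.1 ψ.1 t i j
      by_cases hKij : (θ.1.I ⊔ ψ.1.I) i j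
      · by_cases hexc : t = t₀ ∧ (θ.1.I ⊔ ψ.1.I) i i₀
        · obtain ⟨rfl, hi⟩ := hexc
          have hii₁ : (θ.1.I ⊔ ψ.1.I) i i₁ :=
            (θ.1.I ⊔ ψ.1.I).trans' hi ((θ.1.I ⊔ ψ.1.I).symm' hi₁)
          have hij₁ : (θ.1.I ⊔ ψ.1.I) i j₁ := (θ.1.I ⊔ ψ.1.I).trans' hii₁ hKij₁
          have hzij : z.1.d t i j ≠ none := fun hn =>
            hzdef (z.1.uniform t i j i₁ j₁ (hcast hKij) (hcast hii₁) (hcast hij₁) hn)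
          obtain ⟨w, hw⟩ := Option.ne_none_iff_exists'.mp hzij
          have := (le_parts hz1.le).2 t i j w
            (show (mkJoin θ ψ).1.I i j from hKij) hw
          rw [hw]; exact this.symm
        · have hside : t ≠ t₀ ∨ ¬(θ.1.I ⊔ ψ.1.I) i i₀ := by tauto
          have hag := joinD_agree' (P := ψ.1) (j := j) hI hle huniq hside
          rcases hb : joinD θ.1 ψ.1 t i j with _ | v
          · rcases hzv : z.1.d t i j with _ | w
            · rfl
            · exfalso
              have := (le_parts hz1.le).2 t i j w
                (show (mkJoin θ ψ).1.I i j from hKij) hzv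
              rw [show ((θ.mkJoin ψ : LkmG n m k Γ) : {θ : PColMat n m k // θ.I ∈ bondLattice n Γ}).1.d t i j
                = joinD θ.1 ψ.1 t i j from rfl, hb] at this
              cases this
          · have hb' : joinD ν.1 ψ.1 t i j = some v := by rw [← hag]; exact hb
            exact (le_parts hz2.le).2 t i j v (hcast hKij) hb'
      · rcases hzv : z.1.d t i j with _ | w
        · symm
          rw [joinD_none_iff]
          rintro ⟨hK', -⟩
          exact hKij hK'
        · exact absurd (hIz ▸ z.1.rel_of_def t i j (by simp [hzv])) hKij

end LkmG

/-- **Statement 11.** For any simple graph `Γ` on `[n]` and positive integers `k, m`: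
the poset `L_k^m(Γ)` is a join semilattice, the projection `π : L_k^m(Γ) → L(Γ)`
preserves joins (the join in the bond lattice `L(Γ)` being the join `⊔` of partitions),
and if `θ ⋖ ν` in a fiber `C_I^m` and `ψ ∈ C_J^m`, then for the joins `jθ` of `{θ, ψ}`
and `jν` of `{ν, ψ}` one has `jθ ⋖ jν` or `jθ = jν` in `L_k^m(Γ)`. -/
theorem statement11 (n m k : ℕ) (hk : 0 < k) (hm : 0 < m) (Γ : SimpleGraph (Fin n)) :
    (∀ a b : LkmG n m k Γ, ∃ j, IsLUB {a, b} j) ∧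
    (∀ a b j : LkmG n m k Γ, IsLUB {a, b} j → j.1.I = a.1.I ⊔ b.1.I) ∧
    (∀ θ ν ψ jθ jν : LkmG n m k Γ, LkmG.FiberCovBy θ ν →
      IsLUB {θ, ψ} jθ → IsLUB {ν, ψ} jν → (jθ ⋖ jν ∨ jθ = jν)) := by
  refine ⟨fun a b => ⟨LkmG.mkJoin a b, LkmG.mkJoin_isLUB a b⟩, ?_, ?_⟩
  · intro a b j hj
    rw [hj.unique (LkmG.mkJoin_isLUB a b)]
    rfl
  · intro θ ν ψ jθ jν hcov hθ hν
    rw [hθ.unique (LkmG.mkJoin_isLUB θ ψ), hν.unique (LkmG.mkJoin_isLUB ν ψ)]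
    exact LkmG.fiber_cover_step hcov
end
end
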